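/- arXiv:2209.05119 — 4 statements merged into one kernel-verified Lean document; each statement's English description precedes it below -/
import Mathlib

section
/- For every α ∈ (m, M), the cumulative distribution function of (b_n) does not exist at α: the limit lim_{x→∞} D(x, α)/x does not exist, where D(x, α) = #{1 ≤ n ≤ x : b_n ≤ α}. -/
open Real Filter Set MeasureTheory Topology
open scoped Classical ENNReal

/-- The Cantor-integer function: apply the digit map `h` to the `s`-ary digits of `n`
and read the result in base `p`. -/
def cantorInt (p s : ℕ) (h : ℕ → ℕ) (n : ℕ) : ℕ :=
  (Nat.digits s n).foldr (fun d acc => h d + p * acc) 0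

/-- `b n = a n / n ^ (log_s p)`. -/
noncomputable def cantorB (p s : ℕ) (h : ℕ → ℕ) (n : ℕ) : ℝ :=
  (cantorInt p s h n : ℝ) / (n : ℝ) ^ Real.logb s p

/-- `a(x) = a_⌊x⌋`. -/
noncomputable def cantorA (p s : ℕ) (h : ℕ → ℕ) (x : ℝ) : ℝ :=
  (cantorInt p s h ⌊x⌋₊ : ℝ)

open scoped NNReal

section NatLemmas

variable {p s : ℕ} {h : ℕ → ℕ}

lemma cInt_zero : cantorInt p s h 0 = 0 := by simp [cantorInt]

lemma cInt_rec (hs : 2 ≤ s) {n : ℕ} (hn : n ≠ 0) :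
    cantorInt p s h n = h (n % s) + p * cantorInt p s h (n / s) := by
  unfold cantorInt
  rw [Nat.digits_def' (by omega : 1 < s) (Nat.pos_of_ne_zero hn)]
  rfl

lemma cInt_pos (hs : 2 ≤ s) (hp : s < p)
    (hmono : ∀ i j, i < j → j < s → h i < h j) :
    ∀ n, n ≠ 0 → 1 ≤ cantorInt p s h n := by
  intro n
  induction n using Nat.strong_induction_on with
  | _ n ih =>
    intro hn
    rw [cInt_rec hs hn]
    rcases lt_or_ge n s with hns | hns
    · have h1 : n % s = n := Nat.mod_eq_of_lt hns
      rw [h1]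
      have h2 := hmono 0 n (by omega) hns
      omega
    · have hdiv : n / s ≠ 0 := by
        have := Nat.div_pos hns (by omega : 0 < s); omega
      have := ih (n / s) (Nat.div_lt_self (by omega) (by omega)) hdiv
      nlinarith

lemma cInt_block (hs : 2 ≤ s) (hp : s < p) (hrange : ∀ i, i < s → h i < p) :
    ∀ (K N r : ℕ), r < s ^ K →
      p ^ K * cantorInt p s h N ≤ cantorInt p s h (N * s ^ K + r) ∧
      cantorInt p s h (N * s ^ K + r) + 1 ≤ p ^ K * cantorInt p s h N + p ^ K := by
  intro K
  induction K with
  | zero =>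
    intro N r hr
    simp only [pow_zero] at hr
    have : r = 0 := by omega
    subst this
    simp
  | succ K ih =>
    intro N r hr
    by_cases hz : N * s ^ (K + 1) + r = 0
    · have hsp : 0 < s ^ (K + 1) := by positivity
      have hN : N = 0 := by nlinarith [Nat.le_of_eq hz]
      have hr0 : r = 0 := by omega
      have hpp : 1 ≤ p ^ (K + 1) := Nat.one_le_pow _ _ (by omega)
      subst hN; subst hr0
      simp [cInt_zero]
      omega
    · rw [cInt_rec hs hz]
      have hmod : (N * s ^ (K + 1) + r) % s = r % s := by
        rw [pow_succ, show N * (s ^ K * s) + r = r + (N * s ^ K) * s by ring]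
        exact Nat.add_mul_mod_self_right r (N * s ^ K) s
      have hdiv : (N * s ^ (K + 1) + r) / s = N * s ^ K + r / s := by
        rw [pow_succ, show N * (s ^ K * s) + r = r + (N * s ^ K) * s by ring,
          Nat.add_mul_div_right _ _ (by omega : 0 < s)]
        omega
      have hrs : r / s < s ^ K := Nat.div_lt_of_lt_mul (by rw [← pow_succ']; exact hr)
      obtain ⟨ihl, ihu⟩ := ih N (r / s) hrs
      have hh : h (r % s) + 1 ≤ p := hrange _ (Nat.mod_lt _ (by omega))
      rw [hmod, hdiv]
      constructor
      · have : p * (p ^ K * cantorInt p s h N) ≤ p * cantorInt p s h (N * s ^ K + r / s) :=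
          Nat.mul_le_mul_left p ihl
        calc p ^ (K + 1) * cantorInt p s h N = p * (p ^ K * cantorInt p s h N) := by ring
          _ ≤ p * cantorInt p s h (N * s ^ K + r / s) := this
          _ ≤ h (r % s) + p * cantorInt p s h (N * s ^ K + r / s) := by omega
      · have : p * (cantorInt p s h (N * s ^ K + r / s) + 1) ≤
            p * (p ^ K * cantorInt p s h N + p ^ K) := Nat.mul_le_mul_left p ihu
        calc h (r % s) + p * cantorInt p s h (N * s ^ K + r / s) + 1
            ≤ p + p * cantorInt p s h (N * s ^ K + r / s) := by omega
          _ = p * (cantorInt p s h (N * s ^ K + r / s) + 1) := by ring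
          _ ≤ p * (p ^ K * cantorInt p s h N + p ^ K) := this
          _ = p ^ (K + 1) * cantorInt p s h N + p ^ (K + 1) := by ring

lemma cInt_exact (hs : 2 ≤ s) :
    ∀ (L N r : ℕ), s ^ L ≤ r → r < s ^ (L + 1) →
      cantorInt p s h (N * s ^ (L + 1) + r) =
        p ^ (L + 1) * cantorInt p s h N + cantorInt p s h r := by
  intro L
  induction L with
  | zero =>
    intro N r h1 h2
    simp only [zero_add, pow_zero, pow_one] at h1 h2 ⊢
    have hz : N * s + r ≠ 0 := by omega
    rw [cInt_rec hs hz, cInt_rec hs (by omega : r ≠ 0)]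
    have hmod : (N * s + r) % s = r := by
      rw [show N * s + r = r + N * s by ring, Nat.add_mul_mod_self_right]
      exact Nat.mod_eq_of_lt h2
    have hdiv : (N * s + r) / s = N := by
      rw [show N * s + r = r + N * s by ring, Nat.add_mul_div_right _ _ (by omega : 0 < s)]
      rw [Nat.div_eq_of_lt h2]; omega
    rw [hmod, hdiv, Nat.mod_eq_of_lt h2, Nat.div_eq_of_lt h2, cInt_zero]
    ring
  | succ L ih =>
    intro N r h1 h2
    have hsp : 0 < s ^ (L + 1) := by positivity
    have hr0 : r ≠ 0 := by omega
    have hz : N * s ^ (L + 2) + r ≠ 0 := by omega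
    rw [cInt_rec hs hz, cInt_rec hs hr0]
    have hmod : (N * s ^ (L + 2) + r) % s = r % s := by
      rw [pow_succ, show N * (s ^ (L + 1) * s) + r = r + (N * s ^ (L + 1)) * s by ring]
      exact Nat.add_mul_mod_self_right r _ s
    have hdiv : (N * s ^ (L + 2) + r) / s = N * s ^ (L + 1) + r / s := by
      rw [pow_succ, show N * (s ^ (L + 1) * s) + r = r + (N * s ^ (L + 1)) * s by ring,
        Nat.add_mul_div_right _ _ (by omega : 0 < s)]
      omega
    have hd1 : s ^ L ≤ r / s := by
      rw [Nat.le_div_iff_mul_le (by omega : 0 < s)]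
      rw [← pow_succ]; exact h1
    have hd2 : r / s < s ^ (L + 1) := Nat.div_lt_of_lt_mul (by rw [← pow_succ']; exact h2)
    rw [hmod, hdiv, ih N (r / s) hd1 hd2]
    ring


def repN (s L n0 : ℕ) : ℕ → ℕ
  | 0 => 0
  | j + 1 => repN s L n0 j * s ^ L + n0

lemma sum_pow_succ_aux (x j : ℕ) :
    ∑ i ∈ Finset.range (j + 1), x ^ i = (∑ i ∈ Finset.range j, x ^ i) * x + 1 := by
  rw [Finset.sum_range_succ', Finset.sum_mul]
  simp [pow_succ]

lemma repN_val (s L n0 : ℕ) (j : ℕ) :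
    repN s L n0 j = n0 * ∑ i ∈ Finset.range j, (s ^ L) ^ i := by
  induction j with
  | zero => simp [repN]
  | succ j ih =>
    simp only [repN]
    rw [ih, sum_pow_succ_aux]
    ring

lemma cInt_repN (hs : 2 ≤ s) (Lg n0 : ℕ) (h1 : s ^ Lg ≤ n0) (h2 : n0 < s ^ (Lg + 1))
    (j : ℕ) :
    cantorInt p s h (repN s (Lg + 1) n0 j) =
      cantorInt p s h n0 * ∑ i ∈ Finset.range j, (p ^ (Lg + 1)) ^ i := by
  induction j with
  | zero => simp [repN, cInt_zero]
  | succ j ih =>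
    simp only [repN]
    rw [cInt_exact hs Lg _ n0 h1 h2, ih, sum_pow_succ_aux]
    ring

end NatLemmas

section RealLemmas

lemma rpow_sub_one_add_one_le {x q : ℝ} (hx : 1 ≤ x) (hq : 1 ≤ q) :
    (x - 1) ^ q + 1 ≤ x ^ q := by
  have h1 : (0:ℝ) ≤ x - 1 := by linarith
  have := NNReal.add_rpow_le_rpow_add ((x - 1).toNNReal) 1 hq
  have h2 : (((x - 1).toNNReal + 1 : ℝ≥0) : ℝ) = x := by
    simp [Real.coe_toNNReal _ h1]
  calc (x - 1) ^ q + 1 = (((x - 1).toNNReal ^ q + 1 ^ q : ℝ≥0) : ℝ) := by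
        push_cast [NNReal.coe_rpow, Real.coe_toNNReal _ h1]
        simp
    _ ≤ ((((x - 1).toNNReal + 1) ^ q : ℝ≥0) : ℝ) := by exact_mod_cast this
    _ = x ^ q := by rw [NNReal.coe_rpow, h2]

variable {p s : ℕ}

lemma powβ (hs : 2 ≤ s) (hp : s < p) (K : ℕ) :
    ((s : ℝ) ^ K) ^ Real.logb s p = (p : ℝ) ^ K := by
  have hs0 : (0:ℝ) < s := by exact_mod_cast (by omega : 0 < s)
  have hp0 : (0:ℝ) < p := by exact_mod_cast (by omega : 0 < p)
  have hne : (s:ℝ) ≠ 1 := by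
    have : (2:ℝ) ≤ s := by exact_mod_cast hs
    linarith
  have h1 : (s:ℝ) ^ Real.logb s p = p := Real.rpow_logb hs0 hne hp0
  have h2 : ((s:ℝ) ^ K) ^ Real.logb s p = ((s:ℝ) ^ Real.logb s p) ^ K := by
    rw [← Real.rpow_natCast (s:ℝ) K, ← Real.rpow_mul hs0.le, mul_comm,
      Real.rpow_mul hs0.le, Real.rpow_natCast]
  rw [h2, h1]

lemma logb_one_le (hs : 2 ≤ s) (hp : s < p) : 1 ≤ Real.logb s p := by
  have hs1 : (1:ℝ) < s := by exact_mod_cast (by omega : 1 < s)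
  have hsp : (s:ℝ) ≤ p := by exact_mod_cast hp.le
  calc (1:ℝ) = Real.logb s s := (Real.logb_self_eq_one hs1).symm
    _ ≤ Real.logb s p := Real.logb_le_logb_of_le hs1 (by linarith) hsp


lemma blockLow (hs : 2 ≤ s) (hp : s < p) {h : ℕ → ℕ} (hrange : ∀ i, i < s → h i < p)
    {α : ℝ} {N : ℕ} (hN : 1 ≤ N)
    (hkey : (cantorInt p s h N : ℝ) + 1 ≤ α * (N : ℝ) ^ Real.logb s p) :
    ∀ K r : ℕ, r < s ^ K → cantorB p s h (N * s ^ K + r) ≤ α := by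
  intro K r hr
  set β := Real.logb s p with hβ
  have hβ0 : 0 ≤ β := le_trans zero_le_one (logb_one_le hs hp)
  have hN0 : (0:ℝ) < N := by exact_mod_cast hN
  have hNβ : (0:ℝ) < (N:ℝ) ^ β := Real.rpow_pos_of_pos hN0 β
  have hpK : (0:ℝ) < (p:ℝ) ^ K := by
    have : (0:ℝ) < p := by exact_mod_cast (by omega : 0 < p)
    positivity
  have hα : 0 < α := by nlinarith [show (0:ℝ) ≤ (cantorInt p s h N : ℝ) from Nat.cast_nonneg _]
  obtain ⟨-, hup⟩ := cInt_block hs hp hrange K N r hr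
  have hup' : (cantorInt p s h (N * s ^ K + r) : ℝ) + 1 ≤ (p:ℝ) ^ K * ((cantorInt p s h N : ℝ) + 1) := by
    have := (Nat.cast_le (α := ℝ)).2 hup
    push_cast at this ⊢
    linarith
  have hden : (N : ℝ) ^ β * (p:ℝ) ^ K ≤ ((N * s ^ K + r : ℕ) : ℝ) ^ β := by
    have hle : (N:ℝ) * (s:ℝ) ^ K ≤ ((N * s ^ K + r : ℕ) : ℝ) := by
      push_cast; nlinarith [Nat.cast_nonneg (α := ℝ) r]
    have h1 : ((N:ℝ) * (s:ℝ) ^ K) ^ β ≤ ((N * s ^ K + r : ℕ) : ℝ) ^ β :=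
      Real.rpow_le_rpow (by positivity) hle hβ0
    rwa [Real.mul_rpow (by positivity) (by positivity), powβ hs hp] at h1
  rw [cantorB, ← hβ, div_le_iff₀ (lt_of_lt_of_le (by positivity) hden)]
  calc (cantorInt p s h (N * s ^ K + r) : ℝ)
      ≤ (p:ℝ) ^ K * ((cantorInt p s h N : ℝ) + 1) - 1 := by linarith
    _ ≤ α * ((N : ℝ) ^ β * (p:ℝ) ^ K) := by nlinarith
    _ ≤ α * ((N * s ^ K + r : ℕ) : ℝ) ^ β := by nlinarith

lemma blockHigh (hs : 2 ≤ s) (hp : s < p) {h : ℕ → ℕ} (hrange : ∀ i, i < s → h i < p)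
    {α : ℝ} (hα : 0 ≤ α) {N : ℕ} (hN : 1 ≤ N)
    (hkey : α * ((N : ℝ) + 1) ^ Real.logb s p < (cantorInt p s h N : ℝ)) :
    ∀ K r : ℕ, r < s ^ K → α < cantorB p s h (N * s ^ K + r) := by
  intro K r hr
  set β := Real.logb s p with hβ
  have hβ0 : 0 ≤ β := le_trans zero_le_one (logb_one_le hs hp)
  have hpK : (0:ℝ) < (p:ℝ) ^ K := by
    have : (0:ℝ) < p := by exact_mod_cast (by omega : 0 < p)
    positivity
  have hnum : (p:ℝ) ^ K * (cantorInt p s h N : ℝ) ≤ (cantorInt p s h (N * s ^ K + r) : ℝ) := by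
    have := (Nat.cast_le (α := ℝ)).2 (cInt_block hs hp hrange K N r hr).1
    push_cast at this ⊢
    linarith
  have hn1 : 1 ≤ N * s ^ K + r := by
    have : 1 ≤ s ^ K := Nat.one_le_pow _ _ (by omega)
    nlinarith
  have hnr0 : (0:ℝ) < ((N * s ^ K + r : ℕ) : ℝ) := by exact_mod_cast hn1
  have hden : ((N * s ^ K + r : ℕ) : ℝ) ^ β ≤ ((N:ℝ) + 1) ^ β * (p:ℝ) ^ K := by
    have hle : ((N * s ^ K + r : ℕ) : ℝ) ≤ ((N:ℝ) + 1) * (s:ℝ) ^ K := by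
      push_cast
      have : (r:ℝ) ≤ (s:ℝ) ^ K - 1 := by
        have : (r:ℝ) + 1 ≤ ((s ^ K : ℕ) : ℝ) := by exact_mod_cast hr
        push_cast at this; linarith
      nlinarith
    have h1 : ((N * s ^ K + r : ℕ) : ℝ) ^ β ≤ (((N:ℝ) + 1) * (s:ℝ) ^ K) ^ β :=
      Real.rpow_le_rpow (by positivity) hle hβ0
    rwa [Real.mul_rpow (by positivity) (by positivity), powβ hs hp] at h1
  rw [cantorB, ← hβ, lt_div_iff₀ (Real.rpow_pos_of_pos hnr0 β)]
  calc α * ((N * s ^ K + r : ℕ) : ℝ) ^ β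
      ≤ α * (((N:ℝ) + 1) ^ β * (p:ℝ) ^ K) := by nlinarith
    _ < (p:ℝ) ^ K * (cantorInt p s h N : ℝ) := by nlinarith
    _ ≤ (cantorInt p s h (N * s ^ K + r) : ℝ) := hnum


lemma exists_high (hs : 2 ≤ s) (hp : s < p) {h : ℕ → ℕ} (hrange : ∀ i, i < s → h i < p)
    {α : ℝ} {n2 : ℕ} (hn2 : 1 ≤ n2) (hgt : α < cantorB p s h n2) :
    ∃ N : ℕ, 1 ≤ N ∧ α * ((N : ℝ) + 1) ^ Real.logb s p < (cantorInt p s h N : ℝ) := by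
  set β := Real.logb s p with hβ
  have hβ0 : 0 ≤ β := le_trans zero_le_one (logb_one_le hs hp)
  have hs1 : (1:ℝ) < s := by exact_mod_cast (by omega : 1 < s)
  have hn20 : (0:ℝ) < n2 := by exact_mod_cast hn2
  have hb2 : α * (n2 : ℝ) ^ β < (cantorInt p s h n2 : ℝ) := by
    rw [cantorB, ← hβ, lt_div_iff₀ (Real.rpow_pos_of_pos hn20 β)] at hgt
    exact hgt
  have hgeo : Tendsto (fun k : ℕ => ((s:ℝ)⁻¹) ^ k) atTop (nhds 0) :=
    tendsto_pow_atTop_nhds_zero_of_lt_one (by positivity)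
      (by rw [inv_lt_one_iff₀]; right; exact hs1)
  have hin : Tendsto (fun k : ℕ => (n2:ℝ) + ((s:ℝ)⁻¹) ^ k) atTop (nhds (n2:ℝ)) := by
    simpa using (tendsto_const_nhds (x := (n2:ℝ)) (f := atTop)).add hgeo
  have hco : ContinuousAt (fun x : ℝ => x ^ β) (n2:ℝ) :=
    Real.continuousAt_rpow_const _ _ (Or.inr hβ0)
  have hlim : Tendsto (fun k : ℕ => α * ((n2:ℝ) + ((s:ℝ)⁻¹) ^ k) ^ β) atTop
      (nhds (α * (n2:ℝ) ^ β)) := (hco.tendsto.comp hin).const_mul α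
  have hev := hlim.eventually_lt
    (tendsto_const_nhds (x := ((cantorInt p s h n2 : ℕ):ℝ)) (f := atTop)) hb2
  obtain ⟨k, hk⟩ := hev.exists
  refine ⟨n2 * s ^ k, Nat.mul_pos (by omega) (pow_pos (by omega) k), ?_⟩
  have hsK : (0:ℝ) < (s:ℝ) ^ k := by positivity
  have hpK : (0:ℝ) < (p:ℝ) ^ k := by
    have : (0:ℝ) < p := by exact_mod_cast (by omega : 0 < p)
    positivity
  have hcast : ((n2 * s ^ k : ℕ) : ℝ) + 1 = ((n2:ℝ) + ((s:ℝ)⁻¹) ^ k) * (s:ℝ) ^ k := by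
    push_cast
    rw [add_mul]
    congr 1
    rw [inv_pow, inv_mul_cancel₀ (ne_of_gt hsK)]
  have hnum : (p:ℝ) ^ k * (cantorInt p s h n2 : ℝ) ≤ (cantorInt p s h (n2 * s ^ k) : ℝ) := by
    have h0 := (cInt_block hs hp hrange k n2 0 (pow_pos (by omega) k)).1
    rw [Nat.add_zero] at h0
    exact_mod_cast h0
  rw [hcast, Real.mul_rpow (by positivity) (by positivity), powβ hs hp]
  calc α * (((n2:ℝ) + ((s:ℝ)⁻¹) ^ k) ^ β * (p:ℝ) ^ k)
      = (α * ((n2:ℝ) + ((s:ℝ)⁻¹) ^ k) ^ β) * (p:ℝ) ^ k := by ring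
    _ < (cantorInt p s h n2 : ℝ) * (p:ℝ) ^ k := by
        exact mul_lt_mul_of_pos_right hk hpK
    _ = (p:ℝ) ^ k * (cantorInt p s h n2 : ℝ) := by ring
    _ ≤ (cantorInt p s h (n2 * s ^ k) : ℝ) := hnum


lemma exists_low (hs : 2 ≤ s) (hp : s < p) {h : ℕ → ℕ}
    (hmono : ∀ i j, i < j → j < s → h i < h j)
    {α : ℝ} {n0 : ℕ} (hn0 : 1 ≤ n0) (hlt : cantorB p s h n0 < α) :
    ∃ N : ℕ, 1 ≤ N ∧ (cantorInt p s h N : ℝ) + 1 ≤ α * (N : ℝ) ^ Real.logb s p := by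
  set β := Real.logb s p with hβ
  have hβ1 : 1 ≤ β := logb_one_le hs hp
  have hβ0 : 0 ≤ β := by linarith
  have hs1 : (1:ℝ) < s := by exact_mod_cast (by omega : 1 < s)
  have hp1 : (1:ℝ) < p := by exact_mod_cast (by omega : 1 < p)
  have hn00 : (0:ℝ) < n0 := by exact_mod_cast hn0
  set Lg := Nat.log s n0 with hLg
  have hd1 : s ^ Lg ≤ n0 := Nat.pow_log_le_self s (by omega)
  have hd2 : n0 < s ^ (Lg + 1) := Nat.lt_pow_succ_log_self (by omega) n0
  have hSl1 : (1:ℝ) < (s:ℝ) ^ (Lg + 1) := one_lt_pow₀ hs1 (by omega)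
  have hPl1 : (1:ℝ) < (p:ℝ) ^ (Lg + 1) := one_lt_pow₀ hp1 (by omega)
  have hSl0 : (0:ℝ) < (s:ℝ) ^ (Lg + 1) - 1 := by linarith
  have hPl0 : (0:ℝ) < (p:ℝ) ^ (Lg + 1) - 1 := by linarith
  have hA0 : (1:ℝ) ≤ (cantorInt p s h n0 : ℝ) := by
    exact_mod_cast cInt_pos hs hp hmono n0 (by omega)
  have hb0 : (cantorInt p s h n0 : ℝ) < α * (n0:ℝ) ^ β := by
    rw [cantorB, ← hβ, div_lt_iff₀ (Real.rpow_pos_of_pos hn00 β)] at hlt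
    exact hlt
  have hSljβ : ∀ j : ℕ, (((s:ℝ) ^ (Lg + 1)) ^ j) ^ β = ((p:ℝ) ^ (Lg + 1)) ^ j := by
    intro j
    rw [← pow_mul, powβ hs hp ((Lg + 1) * j), pow_mul]
  have hgeoP : Tendsto (fun j : ℕ => (((p:ℝ) ^ (Lg + 1))⁻¹) ^ j) atTop (nhds 0) :=
    tendsto_pow_atTop_nhds_zero_of_lt_one (by positivity)
      (by rw [inv_lt_one_iff₀]; right; exact hPl1)
  have hgeoS : Tendsto (fun j : ℕ => (((s:ℝ) ^ (Lg + 1))⁻¹) ^ j) atTop (nhds 0) :=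
    tendsto_pow_atTop_nhds_zero_of_lt_one (by positivity)
      (by rw [inv_lt_one_iff₀]; right; exact hSl1)
  set A0 := (cantorInt p s h n0 : ℝ) with hA0def
  -- limit of F
  have hF : Tendsto (fun j : ℕ =>
      (A0 * ((((p:ℝ) ^ (Lg + 1)) ^ j - 1) / ((p:ℝ) ^ (Lg + 1) - 1)) + 1)
        * (((p:ℝ) ^ (Lg + 1))⁻¹) ^ j) atTop (nhds (A0 / ((p:ℝ) ^ (Lg + 1) - 1))) := by
    have t1 := (((tendsto_const_nhds (x := (1:ℝ)) (f := (atTop : Filter ℕ))).sub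
      hgeoP).const_mul A0).div_const ((p:ℝ) ^ (Lg + 1) - 1) |>.add hgeoP
    simp only [sub_zero, mul_one, add_zero] at t1
    refine t1.congr fun j => ?_
    have hppos : ((p:ℝ) ^ (Lg + 1)) ^ j ≠ 0 := by positivity
    rw [inv_pow]
    field_simp
  -- limit of G
  have hG : Tendsto (fun j : ℕ =>
      (α * (n0:ℝ) ^ β * (((((s:ℝ) ^ (Lg + 1)) ^ j - 1) / ((s:ℝ) ^ (Lg + 1) - 1)) ^ β))
        * (((p:ℝ) ^ (Lg + 1))⁻¹) ^ j) atTop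
      (nhds (α * (n0:ℝ) ^ β * ((1 / ((s:ℝ) ^ (Lg + 1) - 1)) ^ β))) := by
    have t2 := ((tendsto_const_nhds (x := (1:ℝ)) (f := (atTop : Filter ℕ))).sub
      hgeoS).div_const ((s:ℝ) ^ (Lg + 1) - 1)
    simp only [sub_zero] at t2
    have hco : ContinuousAt (fun x : ℝ => x ^ β) (1 / ((s:ℝ) ^ (Lg + 1) - 1)) :=
      Real.continuousAt_rpow_const _ _ (Or.inr hβ0)
    have t3 := (hco.tendsto.comp t2).const_mul (α * (n0:ℝ) ^ β)
    refine t3.congr fun j => ?_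
    simp only [Function.comp]
    have hSj1 : (1:ℝ) ≤ ((s:ℝ) ^ (Lg + 1)) ^ j := one_le_pow₀ hSl1.le
    have hnum0 : (0:ℝ) ≤ (((s:ℝ) ^ (Lg + 1)) ^ j - 1) / ((s:ℝ) ^ (Lg + 1) - 1) := by
      apply div_nonneg (by linarith) (by linarith)
    have hSjne : ((s:ℝ) ^ (Lg + 1)) ^ j ≠ 0 := by positivity
    have e1 : (1 - (((s:ℝ) ^ (Lg + 1))⁻¹) ^ j) / ((s:ℝ) ^ (Lg + 1) - 1)
        = ((((s:ℝ) ^ (Lg + 1)) ^ j - 1) / ((s:ℝ) ^ (Lg + 1) - 1))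
          * ((((s:ℝ) ^ (Lg + 1)) ^ j)⁻¹) := by
      rw [inv_pow]
      field_simp
    rw [e1, Real.mul_rpow hnum0 (by positivity),
      Real.inv_rpow (by positivity), hSljβ j, inv_pow]
    ring
  -- strict inequality between the limits
  have hup : ((s:ℝ) ^ (Lg + 1) - 1) ^ β + 1 ≤ (p:ℝ) ^ (Lg + 1) := by
    have h2 := rpow_sub_one_add_one_le hSl1.le hβ1
    have h3 : ((s:ℝ) ^ (Lg + 1)) ^ β = (p:ℝ) ^ (Lg + 1) := by
      rw [hβ]; exact powβ hs hp (Lg + 1)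
    rw [h3] at h2
    exact h2
  have hstrict : A0 / ((p:ℝ) ^ (Lg + 1) - 1)
      < α * (n0:ℝ) ^ β * ((1 / ((s:ℝ) ^ (Lg + 1) - 1)) ^ β) := by
    have h1d : ((1:ℝ) / ((s:ℝ) ^ (Lg + 1) - 1)) ^ β = 1 / (((s:ℝ) ^ (Lg + 1) - 1) ^ β) := by
      rw [Real.div_rpow zero_le_one hSl0.le, Real.one_rpow]
    rw [h1d, mul_one_div, div_lt_div_iff₀ hPl0 (Real.rpow_pos_of_pos hSl0 β)]
    nlinarith [Real.rpow_pos_of_pos hSl0 β]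
  obtain ⟨j, hFG, hj1⟩ := ((hF.eventually_lt hG hstrict).and (eventually_ge_atTop 1)).exists
  refine ⟨repN s (Lg + 1) n0 j, ?_, ?_⟩
  · cases j with
    | zero => omega
    | succ j' => simp only [repN]; omega
  · have hPlinv : (0:ℝ) < (((p:ℝ) ^ (Lg + 1))⁻¹) ^ j := by positivity
    have hmain := (mul_lt_mul_iff_of_pos_right hPlinv).mp hFG
    have ha_eq : (cantorInt p s h (repN s (Lg + 1) n0 j) : ℝ)
        = A0 * ((((p:ℝ) ^ (Lg + 1)) ^ j - 1) / ((p:ℝ) ^ (Lg + 1) - 1)) := by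
      rw [cInt_repN hs Lg n0 hd1 hd2 j]
      push_cast
      rw [geom_sum_eq hPl1.ne' j]
    have hrep_eq : ((repN s (Lg + 1) n0 j : ℕ) : ℝ)
        = (n0:ℝ) * (((((s:ℝ) ^ (Lg + 1)) ^ j - 1) / ((s:ℝ) ^ (Lg + 1) - 1))) := by
      rw [repN_val s (Lg + 1) n0 j]
      push_cast
      rw [geom_sum_eq hSl1.ne' j]
    have hsum0 : (0:ℝ) ≤ ((((s:ℝ) ^ (Lg + 1)) ^ j - 1) / ((s:ℝ) ^ (Lg + 1) - 1)) := by
      have hSj1 : (1:ℝ) ≤ ((s:ℝ) ^ (Lg + 1)) ^ j := one_le_pow₀ hSl1.le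
      apply div_nonneg (by linarith) (by linarith)
    have hrepβ : ((repN s (Lg + 1) n0 j : ℕ) : ℝ) ^ β
        = (n0:ℝ) ^ β * (((((s:ℝ) ^ (Lg + 1)) ^ j - 1) / ((s:ℝ) ^ (Lg + 1) - 1))) ^ β := by
      rw [hrep_eq, Real.mul_rpow hn00.le hsum0]
    rw [ha_eq, hrepβ, ← mul_assoc]
    linarith
end RealLemmas

section Count

variable {s : ℕ} {b : ℕ → ℝ} {α c : ℝ}

lemma count_scaled (hs : 2 ≤ s)
    (hc : Tendsto (fun x : ℝ =>
        (({n : ℕ | 1 ≤ n ∧ (n : ℝ) ≤ x ∧ b n ≤ α}.ncard : ℝ)) / x) atTop (nhds c))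
    (N : ℕ) (hN : 1 ≤ N) :
    Tendsto (fun K : ℕ =>
        (({n : ℕ | 1 ≤ n ∧ n ≤ N * s ^ K - 1 ∧ b n ≤ α}.ncard : ℝ)) / (s : ℝ) ^ K)
      atTop (nhds (c * N)) := by
  have hs1 : (1:ℝ) < (s:ℝ) := by exact_mod_cast hs.trans_lt' (by omega)
  have hs0 : (0:ℝ) < (s:ℝ) := by linarith
  set T : ℕ → Set ℕ := fun y => {n : ℕ | 1 ≤ n ∧ n ≤ y ∧ b n ≤ α} with hT
  have hTset : ∀ y : ℕ, {n : ℕ | 1 ≤ n ∧ (n : ℝ) ≤ ((y : ℕ) : ℝ) ∧ b n ≤ α} = T y := by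
    intro y; ext n; simp [hT, Nat.cast_le]
  set y : ℕ → ℕ := fun K => N * s ^ K - 1 with hy
  have hyK : ∀ K, K ≤ y K := by
    intro K
    have h1 : K < s ^ K := (Nat.lt_pow_self (by omega : 1 < s) : K < s ^ K)
    have h2 : s ^ K ≤ N * s ^ K := by nlinarith
    simp only [hy]
    omega
  have h1 : Tendsto (fun K : ℕ => ((y K : ℕ) : ℝ)) atTop atTop :=
    tendsto_natCast_atTop_atTop.comp (tendsto_atTop_mono hyK tendsto_id)
  have h2 : Tendsto (fun K : ℕ => ((T (y K)).ncard : ℝ) / ((y K : ℕ) : ℝ)) atTop (nhds c) := by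
    have := hc.comp h1
    refine this.congr fun K => ?_
    simp only [Function.comp]
    rw [hTset]
  have hcast : ∀ K, ((y K : ℕ) : ℝ) = N * (s:ℝ) ^ K - 1 := by
    intro K
    have : 1 ≤ N * s ^ K := Nat.mul_pos (by omega) (pow_pos (by omega) K)
    simp only [hy]
    push_cast [Nat.cast_sub this]
    ring
  have h3 : Tendsto (fun K : ℕ => ((y K : ℕ) : ℝ) / (s : ℝ) ^ K) atTop (nhds N) := by
    have hgeo : Tendsto (fun K : ℕ => ((s:ℝ)⁻¹) ^ K) atTop (nhds 0) :=
      tendsto_pow_atTop_nhds_zero_of_lt_one (by positivity) (by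
        rw [inv_lt_one_iff₀]; right; exact hs1)
    have := (tendsto_const_nhds (x := (N:ℝ)) (f := atTop)).sub hgeo
    rw [sub_zero] at this
    refine this.congr fun K => ?_
    have hsK : (s:ℝ) ^ K ≠ 0 := by positivity
    rw [hcast K]
    field_simp
    rw [div_pow, one_pow, sub_mul, div_mul_cancel₀ _ hsK]
  have h4 := h2.mul h3
  refine h4.congr' ?_
  filter_upwards [eventually_ge_atTop 1] with K hK
  have hyK1 : 1 ≤ y K := hyK K |>.trans' hK
  have hyne : ((y K : ℕ) : ℝ) ≠ 0 := by
    have : (1:ℝ) ≤ ((y K : ℕ):ℝ) := by exact_mod_cast hyK1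
    linarith
  field_simp
  rfl

lemma count_block_limit (hs : 2 ≤ s)
    (hc : Tendsto (fun x : ℝ =>
        (({n : ℕ | 1 ≤ n ∧ (n : ℝ) ≤ x ∧ b n ≤ α}.ncard : ℝ)) / x) atTop (nhds c))
    (N : ℕ) (hN : 1 ≤ N) :
    Tendsto (fun K : ℕ =>
        ((({n : ℕ | 1 ≤ n ∧ n ≤ (N + 1) * s ^ K - 1 ∧ b n ≤ α}.ncard : ℝ))
          - (({n : ℕ | 1 ≤ n ∧ n ≤ N * s ^ K - 1 ∧ b n ≤ α}.ncard : ℝ))) / (s : ℝ) ^ K)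
      atTop (nhds c) := by
  have h1 := count_scaled hs hc (N + 1) (by omega)
  have h2 := count_scaled hs hc N hN
  have := h1.sub h2
  have hcc : c * ((N:ℕ)+1 : ℕ) - c * N = c := by push_cast; ring
  rw [hcc] at this
  refine this.congr fun K => ?_
  ring


lemma count_full (hs : 2 ≤ s) (N : ℕ) (hN : 1 ≤ N)
    (hb : ∀ K r : ℕ, r < s ^ K → b (N * s ^ K + r) ≤ α) (K : ℕ) :
    {n : ℕ | 1 ≤ n ∧ n ≤ (N + 1) * s ^ K - 1 ∧ b n ≤ α}.ncard
      = {n : ℕ | 1 ≤ n ∧ n ≤ N * s ^ K - 1 ∧ b n ≤ α}.ncard + s ^ K := by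
  have hsK : 1 ≤ s ^ K := Nat.one_le_pow _ _ (by omega)
  have hNs : 1 ≤ N * s ^ K := Nat.mul_pos (by omega) (by omega)
  have hsplit : (N + 1) * s ^ K = N * s ^ K + s ^ K := by ring
  have hset : {n : ℕ | 1 ≤ n ∧ n ≤ (N + 1) * s ^ K - 1 ∧ b n ≤ α}
      = {n : ℕ | 1 ≤ n ∧ n ≤ N * s ^ K - 1 ∧ b n ≤ α} ∪ Ioc (N * s ^ K - 1) ((N + 1) * s ^ K - 1) := by
    ext n
    simp only [mem_setOf_eq, mem_union, mem_Ioc]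
    constructor
    · rintro ⟨h1, h2, h3⟩
      by_cases hn : n ≤ N * s ^ K - 1
      · exact Or.inl ⟨h1, hn, h3⟩
      · exact Or.inr ⟨by omega, h2⟩
    · rintro (⟨h1, h2, h3⟩ | ⟨h1, h2⟩)
      · exact ⟨h1, by omega, h3⟩
      · refine ⟨by omega, h2, ?_⟩
        have hr : n - N * s ^ K < s ^ K := by omega
        have := hb K (n - N * s ^ K) hr
        rwa [show N * s ^ K + (n - N * s ^ K) = n from by omega] at this
  rw [hset, Set.ncard_union_eq ?disj ?f1 ?f2]
  case disj =>
    rw [Set.disjoint_left]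
    rintro n ⟨_, h2, _⟩ hn
    rw [mem_Ioc] at hn
    omega
  case f1 => exact (finite_le_nat _).subset fun n hn => hn.2.1
  case f2 => exact finite_Ioc _ _
  rw [← Finset.coe_Ioc, Set.ncard_coe_finset, Nat.card_Ioc]
  omega

lemma count_empty (hs : 2 ≤ s) (N : ℕ) (hN : 1 ≤ N)
    (hb : ∀ K r : ℕ, r < s ^ K → α < b (N * s ^ K + r)) (K : ℕ) :
    {n : ℕ | 1 ≤ n ∧ n ≤ (N + 1) * s ^ K - 1 ∧ b n ≤ α}
      = {n : ℕ | 1 ≤ n ∧ n ≤ N * s ^ K - 1 ∧ b n ≤ α} := by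
  have hsK : 1 ≤ s ^ K := Nat.one_le_pow _ _ (by omega)
  have hNs : 1 ≤ N * s ^ K := Nat.mul_pos (by omega) (by omega)
  have hsplit : (N + 1) * s ^ K = N * s ^ K + s ^ K := by ring
  ext n
  simp only [mem_setOf_eq]
  constructor
  · rintro ⟨h1, h2, h3⟩
    refine ⟨h1, ?_, h3⟩
    by_contra hn
    have hr : n - N * s ^ K < s ^ K := by omega
    have := hb K (n - N * s ^ K) hr
    rw [show N * s ^ K + (n - N * s ^ K) = n from by omega] at this
    linarith
  · rintro ⟨h1, h2, h3⟩
    exact ⟨h1, by omega, h3⟩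

end Count


theorem stmt14 (p s : ℕ) (h : ℕ → ℕ) (hs : 2 ≤ s) (hp : s < p)
    (hmono : ∀ i j, i < j → j < s → h i < h j)
    (hrange : ∀ i, i < s → h i < p)
    (m M : ℝ) (hm : m = sInf {x : ℝ | ∃ n : ℕ, 1 ≤ n ∧ cantorB p s h n = x})
    (hM : M = sSup {x : ℝ | ∃ n : ℕ, 1 ≤ n ∧ cantorB p s h n = x}) :
    ∀ α : ℝ, m < α → α < M →
      ¬ ∃ c : ℝ, Tendsto
          (fun x : ℝ =>
            (({n : ℕ | 1 ≤ n ∧ (n : ℝ) ≤ x ∧ cantorB p s h n ≤ α}.ncard : ℝ)) / x)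
          atTop (nhds c) := by
  intro α hmα hαM
  rintro ⟨c, hc⟩
  have hSne : {x : ℝ | ∃ n : ℕ, 1 ≤ n ∧ cantorB p s h n = x}.Nonempty :=
    ⟨cantorB p s h 1, 1, le_refl 1, rfl⟩
  have hα0 : 0 ≤ α := by
    have hm0 : 0 ≤ m := by
      rw [hm]
      apply Real.sInf_nonneg
      rintro x ⟨n, hn, rfl⟩
      exact div_nonneg (Nat.cast_nonneg _) (Real.rpow_nonneg (Nat.cast_nonneg _) _)
    linarith
  obtain ⟨n0, hn0ge, hn0lt⟩ : ∃ n : ℕ, 1 ≤ n ∧ cantorB p s h n < α := by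
    by_contra hcon
    push_neg at hcon
    have : α ≤ m := by
      rw [hm]
      apply le_csInf hSne
      rintro x ⟨n, hn, rfl⟩
      exact hcon n hn
    linarith
  obtain ⟨n2, hn2ge, hn2gt⟩ : ∃ n : ℕ, 1 ≤ n ∧ α < cantorB p s h n := by
    by_contra hcon
    push_neg at hcon
    have : M ≤ α := by
      rw [hM]
      apply csSup_le hSne
      rintro x ⟨n, hn, rfl⟩
      exact hcon n hn
    linarith
  obtain ⟨N1, hN1, hkey1⟩ := exists_low hs hp hmono hn0ge hn0lt
  obtain ⟨N2, hN2, hkey2⟩ := exists_high hs hp hrange hn2ge hn2gt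
  have hLow := blockLow hs hp hrange hN1 hkey1
  have hHigh := blockHigh hs hp hrange hα0 hN2 hkey2
  have hsR : (0:ℝ) < (s:ℝ) := by exact_mod_cast (by omega : 0 < s)
  have hc1 : c = (1:ℝ) := by
    have hlim := count_block_limit hs hc N1 hN1
    refine tendsto_nhds_unique hlim (Tendsto.congr (fun K => ?_)
      (tendsto_const_nhds (x := (1:ℝ))))
    rw [count_full hs N1 hN1 hLow K]
    have hsK : ((s:ℝ)) ^ K ≠ 0 := by positivity
    push_cast
    field_simp
    ring
  have hc0 : c = (0:ℝ) := by
    have hlim := count_block_limit hs hc N2 hN2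
    refine tendsto_nhds_unique hlim (Tendsto.congr (fun K => ?_)
      (tendsto_const_nhds (x := (0:ℝ))))
    rw [count_empty hs N2 hN2 hHigh K]
    simp
  rw [hc0] at hc1
  norm_num at hc1
end

section
/- For every α ∈ [m, M], the logarithmic distribution function of (b_n) exists at α and equals L(α) = (1/ln s) ∫_{E_α} (1/x) dx, where E_α = {x ∈ [1/s, 1) : λ(x) ≤ α}; that is, lim_{x→∞} (1/ln x) Σ_{1 ≤ n ≤ x, b_n ≤ α} 1/n = (1/ln s) ∫_{E_α} x^{-1} dx (Lebesgue integral). -/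
open Real Filter Set MeasureTheory Topology
open scoped Classical ENNReal

namespace CantorAux

variable {p s : ℕ} {h : ℕ → ℕ}

lemma ci_zero : cantorInt p s h 0 = 0 := by simp [cantorInt]

lemma ci_step (hs : 2 ≤ s) {n d : ℕ} (hd : d < s) (hpos : 0 < s * n + d) :
    cantorInt p s h (s * n + d) = h d + p * cantorInt p s h n := by
  unfold cantorInt
  rw [Nat.digits_def' (by omega : 1 < s) hpos]
  have h1 : (s * n + d) % s = d := by
    rw [Nat.mul_add_mod, Nat.mod_eq_of_lt hd]
  have h2 : (s * n + d) / s = n := by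
    rw [Nat.mul_add_div (by omega), Nat.div_eq_of_lt hd, Nat.add_zero]
  rw [h1, h2]
  simp

lemma ci_lt (hs : 2 ≤ s) (hp : s < p) (hrange : ∀ i, i < s → h i < p) (n : ℕ) :
    cantorInt p s h n < p ^ (Nat.digits s n).length := by
  induction n using Nat.strong_induction_on with
  | _ n ih =>
    rcases Nat.eq_zero_or_pos n with rfl | hn
    · simp [ci_zero]
    · obtain ⟨q, d, hd, rfl⟩ : ∃ q d, d < s ∧ n = s * q + d :=
        ⟨n / s, n % s, Nat.mod_lt _ (by omega), (Nat.div_add_mod n s).symm⟩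
      have hq : q < s * q + d := by
        rcases Nat.eq_zero_or_pos q with rfl | hq
        · omega
        · nlinarith
      rw [ci_step hs hd hn, Nat.digits_def' (by omega : 1 < s) hn]
      have h1 : (s * q + d) % s = d := by rw [Nat.mul_add_mod, Nat.mod_eq_of_lt hd]
      have h2 : (s * q + d) / s = q := by
        rw [Nat.mul_add_div (by omega), Nat.div_eq_of_lt hd, Nat.add_zero]
      rw [h1, h2]
      have := ih q hq
      have hhd := hrange d hd
      simp only [List.length_cons, pow_succ]
      nlinarith

lemma ci_ge (hs : 2 ≤ s) (hp : s < p) (hmono : ∀ i j, i < j → j < s → h i < h j)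
    {n : ℕ} (hn : 0 < n) :
    p ^ ((Nat.digits s n).length - 1) ≤ cantorInt p s h n := by
  induction n using Nat.strong_induction_on with
  | _ n ih =>
    obtain ⟨q, d, hd, rfl⟩ : ∃ q d, d < s ∧ n = s * q + d :=
      ⟨n / s, n % s, Nat.mod_lt _ (by omega), (Nat.div_add_mod n s).symm⟩
    rw [ci_step hs hd hn, Nat.digits_def' (by omega : 1 < s) hn]
    have h1 : (s * q + d) % s = d := by rw [Nat.mul_add_mod, Nat.mod_eq_of_lt hd]
    have h2 : (s * q + d) / s = q := by
      rw [Nat.mul_add_div (by omega), Nat.div_eq_of_lt hd, Nat.add_zero]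
    rw [h1, h2]
    rcases Nat.eq_zero_or_pos q with rfl | hq
    · -- n = d, d ≥ 1
      have hd1 : 1 ≤ d := by omega
      have : 1 ≤ h d := by
        have := hmono 0 d hd1 hd
        omega
      simp [ci_zero, Nat.digits_def' (by omega : 1 < s)]
      omega
    · have hq' : q < s * q + d := by nlinarith
      have := ih q hq' hq
      have hlen : 1 ≤ (Nat.digits s q).length := by
        rw [Nat.digits_len s q (by omega) (by omega)]; omega
      calc p ^ ((Nat.digits s q).length + 1 - 1) = p * p ^ ((Nat.digits s q).length - 1) := by
            rw [← pow_succ']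
            congr 1
            omega
        _ ≤ p * cantorInt p s h q := by
            exact Nat.mul_le_mul_left p this
        _ ≤ h d + p * cantorInt p s h q := by omega

lemma n_lt_pow_len (hs : 2 ≤ s) (n : ℕ) : n < s ^ (Nat.digits s n).length :=
  Nat.lt_base_pow_length_digits (by omega)


section RealLemmas

variable (hs : 2 ≤ s) (hp : s < p)

include hs hp

lemma theta_ge_one : 1 ≤ Real.logb s p := by
  have hp0 : (0:ℝ) < p := Nat.cast_pos.mpr (by omega)
  rw [Real.le_logb_iff_rpow_le (by exact_mod_cast by omega : (1:ℝ) < s) hp0]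
  rw [Real.rpow_one]
  exact_mod_cast by omega

lemma s_rpow_theta : (s : ℝ) ^ Real.logb s p = (p : ℝ) :=
  Real.rpow_logb (Nat.cast_pos.mpr (by omega)) (by exact_mod_cast by omega)
    (Nat.cast_pos.mpr (by omega))

lemma spow_rpow (k : ℕ) : ((s : ℝ) ^ k) ^ Real.logb s p = (p : ℝ) ^ k := by
  rw [← Real.rpow_natCast (s:ℝ) k, ← Real.rpow_natCast (p:ℝ) k,
    ← Real.rpow_mul (by positivity), mul_comm, Real.rpow_mul (by positivity),
    s_rpow_theta hs hp]

lemma b_ge (hmono : ∀ i j, i < j → j < s → h i < h j) {n : ℕ} (hn : 1 ≤ n) :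
    (p : ℝ)⁻¹ ≤ cantorB p s h n := by
  set L := (Nat.digits s n).length with hL
  have h1 : (p : ℝ) ^ (L - 1) ≤ (cantorInt p s h n : ℝ) := by
    exact_mod_cast ci_ge hs hp hmono hn
  have h2 : (n : ℝ) ^ Real.logb s p ≤ (p : ℝ) ^ L := by
    calc (n : ℝ) ^ Real.logb s p ≤ ((s : ℝ) ^ L) ^ Real.logb s p := by
          apply Real.rpow_le_rpow (by positivity) _ (by linarith [theta_ge_one hs hp])
          exact_mod_cast (n_lt_pow_len hs n).le
      _ = (p : ℝ) ^ L := spow_rpow hs hp L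
  have hL1 : 1 ≤ L := by
    rw [hL, Nat.digits_len s n (by omega) (by omega)]; omega
  have hp0 : (0:ℝ) < p := Nat.cast_pos.mpr (by omega)
  have hn0 : (0:ℝ) < (n : ℝ) ^ Real.logb s p := by
    apply Real.rpow_pos_of_pos; exact_mod_cast hn
  rw [cantorB, le_div_iff₀ hn0]
  calc (p:ℝ)⁻¹ * (n : ℝ) ^ Real.logb s p ≤ (p:ℝ)⁻¹ * (p:ℝ) ^ L := by
        apply mul_le_mul_of_nonneg_left h2 (by positivity)
    _ = (p:ℝ) ^ (L - 1) := by
        obtain ⟨L', hL'⟩ : ∃ L', L = L' + 1 := ⟨L - 1, by omega⟩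
        rw [hL', Nat.add_sub_cancel, pow_succ]
        field_simp
    _ ≤ _ := h1

end RealLemmas

lemma floor_step (hs : 2 ≤ s) {x : ℝ} (hx : 0 ≤ x) (k : ℕ) :
    ∃ d, d < s ∧ ⌊(s:ℝ)^(k+1) * x⌋₊ = s * ⌊(s:ℝ)^k * x⌋₊ + d := by
  have hs0 : (0:ℝ) < s := Nat.cast_pos.mpr (by omega)
  set y := (s:ℝ)^k * x with hy0
  have hy : 0 ≤ y := by positivity
  have h1 : (s:ℝ)^(k+1) * x = s * y := by rw [hy0]; ring
  have hle : s * ⌊y⌋₊ ≤ ⌊(s:ℝ) * y⌋₊ := by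
    apply Nat.le_floor
    push_cast
    exact mul_le_mul_of_nonneg_left (Nat.floor_le hy) hs0.le
  have hlt : ⌊(s:ℝ) * y⌋₊ < s * ⌊y⌋₊ + s := by
    rw [Nat.floor_lt (by positivity)]
    push_cast
    nlinarith [Nat.lt_floor_add_one y]
  refine ⟨⌊(s:ℝ) * y⌋₊ - s * ⌊y⌋₊, by omega, by rw [h1]; omega⟩

section USeq

variable (p s : ℕ) (h : ℕ → ℕ)

/-- the approximation sequence -/
noncomputable def useq (x : ℝ) (k : ℕ) : ℝ :=
  (cantorInt p s h ⌊(s:ℝ)^k * x⌋₊ : ℝ) / (p:ℝ)^k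

variable {p s h}

lemma useq_mono (hs : 2 ≤ s) (hp : s < p) {x : ℝ} (hx : 0 ≤ x) :
    Monotone (useq p s h x) := by
  have hp0 : (0:ℝ) < p := Nat.cast_pos.mpr (by omega)
  apply monotone_nat_of_le_succ
  intro k
  obtain ⟨d, hd, hfl⟩ := floor_step hs hx k
  unfold useq
  rw [hfl]
  rcases Nat.eq_zero_or_pos (s * ⌊(s:ℝ)^k * x⌋₊ + d) with hz | hpos
  · have h0 : ⌊(s:ℝ)^k * x⌋₊ = 0 :=
      (Nat.mul_eq_zero.mp (Nat.eq_zero_of_add_eq_zero_right hz)).resolve_left (by omega)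
    rw [hz, h0, ci_zero]
    simp
  · rw [ci_step hs hd hpos]
    rw [div_le_div_iff₀ (by positivity) (by positivity), pow_succ]
    push_cast
    nlinarith [pow_pos hp0 k, mul_nonneg (Nat.cast_nonneg (h d)) (pow_nonneg hp0.le k)]

lemma useq_upper (hs : 2 ≤ s) (hp : s < p) (hrange : ∀ i, i < s → h i < p)
    {x : ℝ} (hx : 0 ≤ x) :
    ∀ j k, k ≤ j → useq p s h x j ≤ useq p s h x k + ((p:ℝ)^k)⁻¹ - ((p:ℝ)^j)⁻¹ := by
  have hp0 : (0:ℝ) < p := Nat.cast_pos.mpr (by omega)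
  intro j k hkj
  induction j, hkj using Nat.le_induction with
  | base => simp
  | succ j hkj ih =>
    have step : useq p s h x (j+1) ≤ useq p s h x j + ((p:ℝ) - 1)/(p:ℝ)^(j+1) := by
      obtain ⟨d, hd, hfl⟩ := floor_step hs hx j
      unfold useq
      rw [hfl]
      rcases Nat.eq_zero_or_pos (s * ⌊(s:ℝ)^j * x⌋₊ + d) with hz | hpos
      · have h0 : ⌊(s:ℝ)^j * x⌋₊ = 0 :=
          (Nat.mul_eq_zero.mp (Nat.eq_zero_of_add_eq_zero_right hz)).resolve_left (by omega)
        rw [hz, h0, ci_zero]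
        simp only [Nat.cast_zero, zero_div, zero_add]
        have h1p : (1:ℝ) ≤ p := by exact_mod_cast (by omega : 1 ≤ p)
        have : (0:ℝ) ≤ ((p:ℝ) - 1)/(p:ℝ)^(j+1) := div_nonneg (by linarith) (by positivity)
        linarith
      · rw [ci_step hs hd hpos]
        have hhd : (h d : ℝ) ≤ (p:ℝ) - 1 := by
          have h' := hrange d hd
          have : (h d : ℝ) + 1 ≤ p := by exact_mod_cast h'
          linarith
        have hppow : (0:ℝ) < (p:ℝ)^(j+1) := by positivity
        rw [div_le_iff₀ hppow]
        have expand : (↑(cantorInt p s h ⌊(s:ℝ)^j * x⌋₊) / (p:ℝ)^j + ((p:ℝ)-1)/(p:ℝ)^(j+1)) * (p:ℝ)^(j+1)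
            = (p:ℝ) * (cantorInt p s h ⌊(s:ℝ)^j * x⌋₊ : ℝ) + ((p:ℝ)-1) := by
          field_simp
          ring
        rw [expand]
        push_cast
        linarith
    have harith : ((p:ℝ)^j)⁻¹ - ((p:ℝ) - 1)/(p:ℝ)^(j+1) = ((p:ℝ)^(j+1))⁻¹ := by
      rw [pow_succ]
      field_simp
      ring
    linarith

lemma useq_nonneg {x : ℝ} {k : ℕ} (hp0 : 0 < p) : 0 ≤ useq p s h x k := by
  unfold useq
  have : (0:ℝ) < p := Nat.cast_pos.mpr hp0
  positivity

end USeq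

section Trap

variable {p s : ℕ} {h : ℕ → ℕ}

lemma tendsto_useq (hs : 2 ≤ s) (hp : s < p) {l : ℝ} {x : ℝ} (hx : 0 < x)
    (hl : Tendsto (fun k : ℕ => cantorA p s h ((s : ℝ) ^ k * x) / ((s : ℝ) ^ k * x) ^ Real.logb s p)
      atTop (nhds l)) :
    Tendsto (useq p s h x) atTop (nhds (l * x ^ Real.logb s p)) := by
  have hxt : (0:ℝ) < x ^ Real.logb s p := Real.rpow_pos_of_pos hx _
  have H := hl.mul_const (x ^ Real.logb s p)
  apply H.congr
  intro k
  have hsk : (0:ℝ) < (s:ℝ)^k := by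
    have : (0:ℝ) < s := Nat.cast_pos.mpr (by omega)
    positivity
  unfold cantorA useq
  rw [Real.mul_rpow hsk.le hx.le, spow_rpow hs hp]
  rw [div_mul_eq_mul_div, mul_comm ((p:ℝ)^k) (x ^ Real.logb s p),
    mul_comm ((cantorInt p s h ⌊(s:ℝ)^k * x⌋₊ : ℝ)) (x ^ Real.logb s p),
    mul_div_mul_left _ _ hxt.ne']

lemma useq_le_trap (hs : 2 ≤ s) (hp : s < p) (hrange : ∀ i, i < s → h i < p)
    {l : ℝ} {x : ℝ} (hx : 0 < x)
    (hl : Tendsto (useq p s h x) atTop (nhds l)) (k : ℕ) :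
    useq p s h x k ≤ l ∧ l ≤ useq p s h x k + ((p:ℝ)^k)⁻¹ := by
  constructor
  · exact (useq_mono hs hp hx.le).ge_of_tendsto hl k
  · apply le_of_tendsto hl
    filter_upwards [Ici_mem_atTop k] with j hj
    have := useq_upper hs hp hrange hx.le j k hj
    have hpj : (0:ℝ) < ((p:ℝ)^j)⁻¹ := by
      have : (0:ℝ) < p := Nat.cast_pos.mpr (by omega)
      positivity
    linarith

lemma floor_piece (hs : 2 ≤ s) {k n : ℕ} {x : ℝ}
    (hx : x ∈ Set.Ico ((n:ℝ)/(s:ℝ)^k) (((n:ℝ)+1)/(s:ℝ)^k)) : ⌊(s:ℝ)^k * x⌋₊ = n := by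
  have hsk : (0:ℝ) < (s:ℝ)^k := by
    have : (0:ℝ) < s := Nat.cast_pos.mpr (by omega)
    positivity
  obtain ⟨h1, h2⟩ := hx
  rw [div_le_iff₀ hsk] at h1
  rw [lt_div_iff₀ hsk] at h2
  have hx1 : (n:ℝ) ≤ (s:ℝ)^k * x := by linarith
  have hx2 : (s:ℝ)^k * x < (n:ℝ) + 1 := by linarith
  rw [Nat.floor_eq_iff (by nlinarith [Nat.cast_nonneg (α := ℝ) n] : (0:ℝ) ≤ (s:ℝ)^k * x)]
  push_cast
  exact ⟨hx1, hx2⟩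

end Trap

section Null

variable {p s : ℕ} {h : ℕ → ℕ}

lemma rpow_gap (hs : 2 ≤ s) (hp : s < p) {α u v : ℝ} (hα : 0 < α)
    (hu : (s:ℝ)⁻¹ ≤ u) (huv : u ≤ v) (hv : v ≤ 1) :
    α * ((s:ℝ)⁻¹) ^ (Real.logb s p - 1) * (v - u) ≤ α * v ^ Real.logb s p - α * u ^ Real.logb s p := by
  set θ := Real.logb s p with hθ
  have hθ1 : 1 ≤ θ := theta_ge_one hs hp
  have hs0 : (0:ℝ) < (s:ℝ)⁻¹ := by
    have : (0:ℝ) < s := Nat.cast_pos.mpr (by omega)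
    positivity
  have hu0 : 0 < u := lt_of_lt_of_le hs0 hu
  have hv0 : 0 < v := lt_of_lt_of_le hu0 huv
  -- v^θ - u^θ ≥ u^(θ-1) * (v - u)
  have key : u ^ (θ - 1) * (v - u) ≤ v ^ θ - u ^ θ := by
    have h1 : (v/u) ^ (1:ℝ) ≤ (v/u) ^ θ :=
      Real.rpow_le_rpow_of_exponent_le (by rw [le_div_iff₀ hu0]; linarith) hθ1
    rw [Real.rpow_one] at h1
    have h2 : u ^ θ * (v/u) ≤ u ^ θ * (v/u) ^ θ :=
      mul_le_mul_of_nonneg_left h1 (Real.rpow_nonneg hu0.le _)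
    rw [← Real.mul_rpow hu0.le (by positivity), mul_div_cancel₀ _ hu0.ne'] at h2
    have h3 : u ^ θ * (v/u) = u ^ (θ - 1) * v := by
      rw [Real.rpow_sub hu0, Real.rpow_one]
      field_simp
    rw [h3] at h2
    have h4 : u ^ (θ - 1) * u = u ^ θ := by
      rw [Real.rpow_sub hu0, Real.rpow_one]
      field_simp
    nlinarith [Real.rpow_nonneg hu0.le (θ - 1)]
  have base : ((s:ℝ)⁻¹) ^ (θ - 1) ≤ u ^ (θ - 1) :=
    Real.rpow_le_rpow hs0.le hu (by linarith)
  have hvu : 0 ≤ v - u := by linarith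
  calc α * ((s:ℝ)⁻¹) ^ (θ - 1) * (v - u) ≤ α * (u ^ (θ - 1) * (v - u)) := by
        rw [mul_assoc]
        exact mul_le_mul_of_nonneg_left (mul_le_mul_of_nonneg_right base hvu) hα.le
    _ ≤ α * (v ^ θ - u ^ θ) := mul_le_mul_of_nonneg_left key hα.le
    _ = α * v ^ θ - α * u ^ θ := by ring

lemma level_null (hs : 2 ≤ s) (hp : s < p) (hrange : ∀ i, i < s → h i < p)
    {lam : ℝ → ℝ}
    (hlam : ∀ x : ℝ, 0 < x →
      Tendsto (fun k : ℕ => cantorA p s h ((s : ℝ) ^ k * x) / ((s : ℝ) ^ k * x) ^ Real.logb s p)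
        atTop (nhds (lam x)))
    {α : ℝ} (hα : 0 < α) :
    volume {x : ℝ | x ∈ Set.Ico ((s:ℝ)⁻¹) 1 ∧ lam x = α} = 0 := by
  set θ := Real.logb s p with hθ
  set T := {x : ℝ | x ∈ Set.Ico ((s:ℝ)⁻¹) 1 ∧ lam x = α} with hT
  have hs0 : (0:ℝ) < s := Nat.cast_pos.mpr (by omega)
  have hp0 : (0:ℝ) < p := Nat.cast_pos.mpr (by omega)
  set c0 := α * ((s:ℝ)⁻¹) ^ (θ - 1) with hc0
  have hc0pos : 0 < c0 := by
    have : (0:ℝ) < ((s:ℝ)⁻¹) ^ (θ - 1) := Real.rpow_pos_of_pos (by positivity) _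
    positivity
  -- key: per k bound
  have main : ∀ k : ℕ, volume T ≤ ENNReal.ofReal ((s:ℝ)^k * (2 * ((p:ℝ)^k)⁻¹ / c0)) := by
    intro k
    have hsk : (0:ℝ) < (s:ℝ)^k := by positivity
    have cover : T ⊆ ⋃ n ∈ Finset.range (s^k),
        T ∩ Set.Ico ((n:ℝ)/(s:ℝ)^k) (((n:ℝ)+1)/(s:ℝ)^k) := by
      intro x hx
      obtain ⟨⟨hx1, hx2⟩, -⟩ := id hx
      have hx0 : 0 < x := lt_of_lt_of_le (by positivity) hx1
      rw [Set.mem_iUnion₂]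
      refine ⟨⌊(s:ℝ)^k * x⌋₊, Finset.mem_range.mpr ?_, hx, ?_, ?_⟩
      · -- ⌊s^k x⌋ < s^k
        rw [Nat.floor_lt (by positivity)]
        push_cast
        nlinarith
      · rw [div_le_iff₀ hsk, mul_comm]
        exact Nat.floor_le (by positivity)
      · rw [lt_div_iff₀ hsk, mul_comm]
        push_cast
        exact Nat.lt_floor_add_one _
    refine le_trans (measure_mono cover) (le_trans (measure_biUnion_finset_le _ _) ?_)
    have piece : ∀ n ∈ Finset.range (s^k),
        volume (T ∩ Set.Ico ((n:ℝ)/(s:ℝ)^k) (((n:ℝ)+1)/(s:ℝ)^k)) ≤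
          ENNReal.ofReal (2 * ((p:ℝ)^k)⁻¹ / c0) := by
      intro n _
      set Tn := T ∩ Set.Ico ((n:ℝ)/(s:ℝ)^k) (((n:ℝ)+1)/(s:ℝ)^k) with hTn
      rcases Set.eq_empty_or_nonempty Tn with he | ⟨x0, hx0⟩
      · rw [he]; simp
      · set δ := ((p:ℝ)^k)⁻¹ / c0 with hδ
        have hδ0 : 0 ≤ δ := by positivity
        have hsub : Tn ⊆ Set.Icc (x0 - δ) (x0 + δ) := by
          intro x hx
          -- both x, x0 in T and same piece
          have hfl : ∀ y, y ∈ Tn → ⌊(s:ℝ)^k * y⌋₊ = n := fun y hy => floor_piece hs hy.2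
          have htrap : ∀ y, y ∈ Tn →
              ((cantorInt p s h n : ℝ)/(p:ℝ)^k ≤ α * y ^ θ ∧
                α * y ^ θ ≤ (cantorInt p s h n : ℝ)/(p:ℝ)^k + ((p:ℝ)^k)⁻¹) := by
            intro y hy
            have hy0 : 0 < y := lt_of_lt_of_le (by positivity) hy.1.1.1
            have ht := tendsto_useq hs hp hy0 (hlam y hy0)
            have := useq_le_trap hs hp hrange hy0 ht k
            rw [hy.1.2] at this
            unfold useq at this
            rw [hfl y hy] at this
            exact this
          obtain ⟨l1, l2⟩ := htrap x hx
          obtain ⟨m1, m2⟩ := htrap x0 hx0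
          have hgap : |α * x ^ θ - α * x0 ^ θ| ≤ ((p:ℝ)^k)⁻¹ := by
            rw [abs_le]
            constructor <;> linarith
          -- convert to |x - x0| ≤ δ
          have hxI : (s:ℝ)⁻¹ ≤ x ∧ x ≤ 1 := ⟨hx.1.1.1, hx.1.1.2.le⟩
          have hx0I : (s:ℝ)⁻¹ ≤ x0 ∧ x0 ≤ 1 := ⟨hx0.1.1.1, hx0.1.1.2.le⟩
          have hdist : |x - x0| ≤ δ := by
            rcases le_total x x0 with hc | hc
            · have := rpow_gap hs hp hα hxI.1 hc hx0I.2
              rw [abs_sub_comm, abs_le] at hgap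
              rw [abs_of_nonpos (by linarith), hδ]
              rw [le_div_iff₀ hc0pos]
              rw [← hθ] at this
              nlinarith [hgap.2]
            · have := rpow_gap hs hp hα hx0I.1 hc hxI.2
              rw [abs_le] at hgap
              rw [abs_of_nonneg (by linarith), hδ]
              rw [le_div_iff₀ hc0pos]
              rw [← hθ] at this
              nlinarith [hgap.2]
          rw [abs_le] at hdist
          constructor <;> linarith [hdist.1, hdist.2]
        calc volume Tn ≤ volume (Set.Icc (x0 - δ) (x0 + δ)) := measure_mono hsub
          _ = ENNReal.ofReal (2 * δ) := by
              rw [Real.volume_Icc]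
              congr 1
              ring
          _ = ENNReal.ofReal (2 * ((p:ℝ)^k)⁻¹ / c0) := by
              rw [hδ]
              congr 1
              ring
    calc ∑ n ∈ Finset.range (s^k), volume (T ∩ Set.Ico ((n:ℝ)/(s:ℝ)^k) (((n:ℝ)+1)/(s:ℝ)^k))
        ≤ ∑ _n ∈ Finset.range (s^k), ENNReal.ofReal (2 * ((p:ℝ)^k)⁻¹ / c0) :=
          Finset.sum_le_sum piece
      _ = (s^k : ℕ) * ENNReal.ofReal (2 * ((p:ℝ)^k)⁻¹ / c0) := by
          rw [Finset.sum_const, Finset.card_range, nsmul_eq_mul]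
      _ = ENNReal.ofReal ((s:ℝ)^k * (2 * ((p:ℝ)^k)⁻¹ / c0)) := by
          rw [ENNReal.ofReal_mul (by positivity)]
          congr 1
          rw [← ENNReal.ofReal_natCast (s^k)]
          congr 1
          push_cast
          rfl
  -- conclude
  have htend : Tendsto (fun k : ℕ => ENNReal.ofReal ((s:ℝ)^k * (2 * ((p:ℝ)^k)⁻¹ / c0)))
      atTop (nhds 0) := by
    have heq : ∀ k : ℕ, (s:ℝ)^k * (2 * ((p:ℝ)^k)⁻¹ / c0) = ((s:ℝ)/(p:ℝ))^k * (2 / c0) := by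
      intro k
      rw [div_pow]
      field_simp
    have h1 : Tendsto (fun k : ℕ => ((s:ℝ)/(p:ℝ))^k * (2 / c0)) atTop (nhds (0 * (2/c0))) := by
      apply Tendsto.mul_const
      apply tendsto_pow_atTop_nhds_zero_of_lt_one (by positivity)
      rw [div_lt_one hp0]
      exact_mod_cast hp
    rw [zero_mul] at h1
    have : Tendsto (fun k : ℕ => ENNReal.ofReal (((s:ℝ)/(p:ℝ))^k * (2 / c0))) atTop
        (nhds (ENNReal.ofReal 0)) := ENNReal.tendsto_ofReal h1
    rw [ENNReal.ofReal_zero] at this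
    apply this.congr
    intro k
    rw [heq]
  have := ge_of_tendsto htend (Filter.Eventually.of_forall main)
  exact le_antisymm this zero_le

end Null

section StepIntegral

variable {p s : ℕ} {h : ℕ → ℕ}

lemma step_integral (hs : 2 ≤ s) (w : ℕ → ℝ) {k : ℕ} (hk : 1 ≤ k) :
    ∫ x in Set.Ico ((s:ℝ)⁻¹) 1, ((s:ℝ)^k * w ⌊(s:ℝ)^k * x⌋₊) =
      ∑ n ∈ Finset.Ico (s^(k-1)) (s^k), w n := by
  have hs0 : (0:ℝ) < s := Nat.cast_pos.mpr (by omega)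
  have hsk : (0:ℝ) < (s:ℝ)^k := by positivity
  have cover : Set.Ico ((s:ℝ)⁻¹) 1 =
      ⋃ n ∈ Finset.Ico (s^(k-1)) (s^k), Set.Ico ((n:ℝ)/(s:ℝ)^k) (((n:ℝ)+1)/(s:ℝ)^k) := by
    ext x
    simp only [Set.mem_iUnion₂, Finset.mem_Ico]
    constructor
    · rintro ⟨hx1, hx2⟩
      have hx0 : 0 < x := lt_of_lt_of_le (by positivity) hx1
      have hpow : (s:ℝ)^(k-1) * (s:ℝ) = (s:ℝ)^k := by
        rw [pow_sub_one_mul (by omega : k ≠ 0) (s:ℝ)]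
      refine ⟨⌊(s:ℝ)^k * x⌋₊, ⟨?_, ?_⟩, ?_, ?_⟩
      · apply Nat.le_floor
        push_cast
        calc ((s:ℝ)^(k-1) : ℝ) = (s:ℝ)^k * (s:ℝ)⁻¹ := by
              rw [← hpow]
              field_simp
          _ ≤ (s:ℝ)^k * x := by
              exact mul_le_mul_of_nonneg_left hx1 hsk.le
      · rw [Nat.floor_lt (by positivity)]
        push_cast
        nlinarith
      · rw [div_le_iff₀ hsk, mul_comm]
        exact Nat.floor_le (by positivity)
      · rw [lt_div_iff₀ hsk, mul_comm]
        exact Nat.lt_floor_add_one _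
    · rintro ⟨n, ⟨hn1, hn2⟩, hx1, hx2⟩
      have hpow : (s:ℝ)^(k-1) * (s:ℝ) = (s:ℝ)^k := by
        rw [pow_sub_one_mul (by omega : k ≠ 0) (s:ℝ)]
      constructor
      · calc (s:ℝ)⁻¹ = (s:ℝ)^(k-1)/(s:ℝ)^k := by
              rw [← hpow, eq_div_iff (by positivity)]
              field_simp
        _ ≤ (n:ℝ)/(s:ℝ)^k := by
              gcongr
              exact_mod_cast hn1
        _ ≤ x := hx1
      · calc x < ((n:ℝ)+1)/(s:ℝ)^k := hx2
          _ ≤ (s:ℝ)^k/(s:ℝ)^k := by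
              gcongr
              exact_mod_cast (by omega : n + 1 ≤ s^k)
          _ = 1 := div_self hsk.ne'
  rw [cover, integral_biUnion_finset]
  · apply Finset.sum_congr rfl
    intro n hn
    rw [Finset.mem_Ico] at hn
    have heqon : Set.EqOn (fun x => (s:ℝ)^k * w ⌊(s:ℝ)^k * x⌋₊)
        (fun _ => (s:ℝ)^k * w n) (Set.Ico ((n:ℝ)/(s:ℝ)^k) (((n:ℝ)+1)/(s:ℝ)^k)) := by
      intro x hx
      simp only
      rw [floor_piece hs hx]
    rw [setIntegral_congr_fun measurableSet_Ico heqon, setIntegral_const, measureReal_def, Real.volume_Ico]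
    rw [ENNReal.toReal_ofReal
      (by rw [div_sub_div_same, add_sub_cancel_left]; positivity)]
    rw [div_sub_div_same]
    rw [add_sub_cancel_left]
    rw [smul_eq_mul]
    field_simp
  · intro n _
    exact measurableSet_Ico
  · intro n hn m hm hnm
    simp only [Function.onFun]
    apply Set.Ico_disjoint_Ico.mpr
    have : n ≠ m := by
      intro hc
      exact hnm (by exact_mod_cast hc)
    rcases lt_or_gt_of_ne this with hlt | hgt
    · apply le_trans (min_le_left _ _)
      apply le_max_of_le_right
      gcongr
      exact_mod_cast (by omega : n + 1 ≤ m)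
    · apply le_trans (min_le_right _ _)
      apply le_max_of_le_left
      gcongr
      exact_mod_cast (by omega : m + 1 ≤ n)
  · intro n _
    have heqon : Set.EqOn (fun x => (s:ℝ)^k * w ⌊(s:ℝ)^k * x⌋₊)
        (fun _ => (s:ℝ)^k * w n) (Set.Ico ((n:ℝ)/(s:ℝ)^k) (((n:ℝ)+1)/(s:ℝ)^k)) := by
      intro x hx
      simp only
      rw [floor_piece hs hx]
    exact ((integrableOn_const_iff).mpr (Or.inr (by rw [Real.volume_Ico]; exact ENNReal.ofReal_lt_top))).congr_fun
      heqon.symm measurableSet_Ico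

end StepIntegral

section Misc

variable {p s : ℕ} {h : ℕ → ℕ}

lemma floor_lower (hs : 2 ≤ s) {x : ℝ} (hx1 : (s:ℝ)⁻¹ ≤ x) {k : ℕ} (hk : 1 ≤ k) :
    s^(k-1) ≤ ⌊(s:ℝ)^k * x⌋₊ := by
  have hs0 : (0:ℝ) < s := Nat.cast_pos.mpr (by omega)
  have hsk : (0:ℝ) < (s:ℝ)^k := by positivity
  have hpow : (s:ℝ)^(k-1) * (s:ℝ) = (s:ℝ)^k := pow_sub_one_mul (by omega) _
  apply Nat.le_floor
  push_cast
  calc ((s:ℝ)^(k-1)) = (s:ℝ)^k * (s:ℝ)⁻¹ := by rw [← hpow]; field_simp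
    _ ≤ (s:ℝ)^k * x := mul_le_mul_of_nonneg_left hx1 hsk.le

lemma lam_aux_measurable (hs : 2 ≤ s) {lam : ℝ → ℝ}
    (hlam : ∀ x : ℝ, 0 < x →
      Tendsto (fun k : ℕ => cantorA p s h ((s : ℝ) ^ k * x) / ((s : ℝ) ^ k * x) ^ Real.logb s p)
        atTop (nhds (lam x))) :
    Measurable (fun x : ℝ => if 0 < x then lam x else 0) := by
  have hset : MeasurableSet {x : ℝ | 0 < x} := measurableSet_Ioi (a := (0:ℝ))
  have hmeasG : ∀ k : ℕ, Measurable (fun x : ℝ =>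
      if 0 < x then
        cantorA p s h ((s:ℝ)^k * x) / Real.exp (Real.log ((s:ℝ)^k * x) * Real.logb s p)
      else 0) := by
    intro k
    have m1 : Measurable (fun x : ℝ => (s:ℝ)^k * x) := (measurable_id.const_mul _)
    have m2 : Measurable (fun x : ℝ => cantorA p s h ((s:ℝ)^k * x)) := by
      have hcast : Measurable (fun n : ℕ => ((cantorInt p s h n : ℕ) : ℝ)) := measurable_from_top
      exact hcast.comp (Nat.measurable_floor.comp m1)
    have m3 : Measurable (fun x : ℝ => Real.exp (Real.log ((s:ℝ)^k * x) * Real.logb s p)) :=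
      Real.measurable_exp.comp ((Real.measurable_log.comp m1).mul_const _)
    exact Measurable.ite hset (m2.div m3) measurable_const
  apply measurable_of_tendsto_metrizable hmeasG
  rw [tendsto_pi_nhds]
  intro x
  by_cases hx : 0 < x
  · simp only [if_pos hx]
    have hG := hlam x hx
    apply hG.congr
    intro k
    have hy0 : (0:ℝ) < (s:ℝ)^k * x := by
      have : (0:ℝ) < s := Nat.cast_pos.mpr (by omega)
      positivity
    rw [Real.rpow_def_of_pos hy0]
  · simp only [if_neg hx]
    exact tendsto_const_nhds

end Misc
end CantorAux

theorem stmt15 (p s : ℕ) (h : ℕ → ℕ) (hs : 2 ≤ s) (hp : s < p)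
    (hmono : ∀ i j, i < j → j < s → h i < h j)
    (hrange : ∀ i, i < s → h i < p)
    (m M : ℝ) (hm : m = sInf {x : ℝ | ∃ n : ℕ, 1 ≤ n ∧ cantorB p s h n = x})
    (hM : M = sSup {x : ℝ | ∃ n : ℕ, 1 ≤ n ∧ cantorB p s h n = x})
    (lam : ℝ → ℝ)
    (hlam : ∀ x : ℝ, 0 < x →
      Tendsto (fun k : ℕ => cantorA p s h ((s : ℝ) ^ k * x) / ((s : ℝ) ^ k * x) ^ Real.logb s p)
        atTop (nhds (lam x))) :
    ∀ α ∈ Set.Icc m M,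
      Tendsto
        (fun x : ℝ => (Real.log x)⁻¹ *
          ∑ n ∈ Finset.Icc 1 ⌊x⌋₊, if cantorB p s h n ≤ α then (1 : ℝ) / n else 0)
        atTop
        (nhds ((Real.log s)⁻¹ *
          ∫ y in {x : ℝ | x ∈ Set.Ico ((s : ℝ)⁻¹) 1 ∧ lam x ≤ α}, 1 / y)) := by
  classical
  intro α hαmem
  have hs0 : (0:ℝ) < s := Nat.cast_pos.mpr (by omega)
  have hs1 : (1:ℝ) < s := by exact_mod_cast (by omega : 1 < s)
  have hp0 : (0:ℝ) < p := Nat.cast_pos.mpr (by omega)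
  have hα0 : 0 < α := by
    have hSne : {x : ℝ | ∃ n : ℕ, 1 ≤ n ∧ cantorB p s h n = x}.Nonempty :=
      ⟨cantorB p s h 1, 1, le_refl _, rfl⟩
    have hlb : ∀ y ∈ {x : ℝ | ∃ n : ℕ, 1 ≤ n ∧ cantorB p s h n = x}, (p:ℝ)⁻¹ ≤ y := by
      rintro y ⟨n, hn, rfl⟩
      exact CantorAux.b_ge hs hp hmono hn
    have h1 : (p:ℝ)⁻¹ ≤ m := hm ▸ le_csInf hSne hlb
    have h2 : (0:ℝ) < (p:ℝ)⁻¹ := by positivity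
    have := hαmem.1
    linarith
  set w : ℕ → ℝ := fun n => if cantorB p s h n ≤ α then (1:ℝ)/n else 0 with hw
  have hw0 : ∀ n, 0 ≤ w n := by
    intro n
    rw [hw]
    dsimp only
    split
    · positivity
    · exact le_refl 0
  set E := {x : ℝ | x ∈ Set.Ico ((s:ℝ)⁻¹) 1 ∧ lam x ≤ α} with hE
  set lam' : ℝ → ℝ := fun x => if 0 < x then lam x else 0 with hlamd
  have hlam'meas : Measurable lam' := CantorAux.lam_aux_measurable hs hlam
  have htmeas : MeasurableSet {x : ℝ | lam' x ≤ α} := hlam'meas measurableSet_Iic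
  have hEeq : E = Set.Ico ((s:ℝ)⁻¹) 1 ∩ {x : ℝ | lam' x ≤ α} := by
    rw [hE]
    ext x
    simp only [Set.mem_setOf_eq, Set.mem_inter_iff, Set.mem_Ico]
    constructor
    · rintro ⟨⟨h1, h2⟩, h3⟩
      have hx0 : 0 < x := lt_of_lt_of_le (by positivity) h1
      exact ⟨⟨h1, h2⟩, by rw [hlamd]; simp only; rw [if_pos hx0]; exact h3⟩
    · rintro ⟨⟨h1, h2⟩, h3⟩
      have hx0 : 0 < x := lt_of_lt_of_le (by positivity) h1
      refine ⟨⟨h1, h2⟩, ?_⟩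
      rw [hlamd] at h3
      simp only at h3
      rwa [if_pos hx0] at h3
  set I : ℝ := ∫ y in E, 1/y with hI
  set F : ℕ → ℝ → ℝ := fun k x => (s:ℝ)^k * w ⌊(s:ℝ)^k * x⌋₊ with hF
  set f : ℝ → ℝ := fun x => if lam' x ≤ α then 1/x else 0 with hf
  have hIeq : ∫ x in Set.Ico ((s:ℝ)⁻¹) 1, f x = I := by
    have hfind : f = fun x => Set.indicator {x : ℝ | lam' x ≤ α} (fun y => 1/y) x := by
      funext x
      rw [hf, Set.indicator]
      simp only [Set.mem_setOf_eq]
    rw [hfind, MeasureTheory.setIntegral_indicator htmeas, hI, hEeq]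
  have hDCT : Tendsto (fun k => ∫ x in Set.Ico ((s:ℝ)⁻¹) 1, F k x) atTop (nhds I) := by
    rw [← hIeq]
    apply MeasureTheory.tendsto_integral_of_dominated_convergence (fun _ => (s:ℝ))
    · intro k
      apply Measurable.aestronglyMeasurable
      have hcast : Measurable (fun n : ℕ => w n) := measurable_from_top
      exact (hcast.comp (Nat.measurable_floor.comp (measurable_id.const_mul _))).const_mul _
    · apply ((integrableOn_const_iff).mpr (Or.inr _))
      rw [Real.volume_Ico]
      exact ENNReal.ofReal_lt_top
    · intro k
      rw [ae_restrict_iff' measurableSet_Ico]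
      apply Eventually.of_forall
      intro x hx
      obtain ⟨hx1, hx2⟩ := hx
      have hx0 : 0 < x := lt_of_lt_of_le (by positivity) hx1
      rcases Nat.eq_zero_or_pos ⌊(s:ℝ)^k * x⌋₊ with h0 | h1
      · rw [hF]
        simp only
        rw [h0]
        have hz : w 0 = 0 := by rw [hw]; simp
        rw [hz, mul_zero, norm_zero]
        linarith
      · set n := ⌊(s:ℝ)^k * x⌋₊ with hn
        have hwle : w n ≤ 1/(n:ℝ) := by
          rw [hw]
          dsimp only
          split
          · exact le_refl _
          · positivity
        have hnl : s^(k-1) ≤ n := by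
          rcases Nat.eq_zero_or_pos k with rfl | hk
          · simp; omega
          · exact CantorAux.floor_lower hs hx1 hk
        have hn0 : (0:ℝ) < n := by exact_mod_cast h1
        have h3 : (s:ℝ)^k ≤ (s:ℝ) * n := by
          rcases Nat.eq_zero_or_pos k with rfl | hk
          · have hn1 : (1:ℝ) ≤ n := by exact_mod_cast h1
            nlinarith
          · have hc : ((s:ℕ)^(k-1) : ℝ) ≤ (n:ℝ) := by exact_mod_cast hnl
            have hpow : (s:ℝ)^(k-1) * (s:ℝ) = (s:ℝ)^k := pow_sub_one_mul (by omega) _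
            calc (s:ℝ)^k = (s:ℝ)^(k-1) * (s:ℝ) := hpow.symm
              _ ≤ (n:ℝ) * (s:ℝ) := by
                  apply mul_le_mul_of_nonneg_right _ hs0.le
                  push_cast at hc ⊢
                  exact hc
              _ = (s:ℝ) * n := by ring
        have hchain : (s:ℝ)^k * w n ≤ (s:ℝ) := by
          calc (s:ℝ)^k * w n ≤ (s:ℝ)^k * (1/n) := by
                apply mul_le_mul_of_nonneg_left hwle (by positivity)
            _ = (s:ℝ)^k / n := by ring
            _ ≤ (s:ℝ) := by
                rw [div_le_iff₀ hn0]
                linarith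
        rw [hF]
        simp only
        rw [← hn, Real.norm_eq_abs, abs_of_nonneg (mul_nonneg (by positivity) (hw0 n))]
        exact hchain
    · have hN := CantorAux.level_null hs hp hrange hlam hα0
      rw [ae_restrict_iff' measurableSet_Ico]
      have hNae : ∀ᵐ x : ℝ, ¬(x ∈ Set.Ico ((s:ℝ)⁻¹) 1 ∧ lam x = α) := by
        rw [ae_iff]
        simpa only [not_not] using hN
      filter_upwards [hNae] with x hxn hxI
      obtain ⟨hx1, hx2⟩ := hxI
      have hx0 : 0 < x := lt_of_lt_of_le (by positivity) hx1
      have hne : lam x ≠ α := fun hc => hxn ⟨⟨hx1, hx2⟩, hc⟩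
      have hr : Tendsto (fun k : ℕ => (s:ℝ)^k * x) atTop atTop :=
        Tendsto.atTop_mul_const hx0 (tendsto_pow_atTop_atTop_of_one_lt hs1)
      have hfl_t : Tendsto (fun k : ℕ => (⌊(s:ℝ)^k * x⌋₊:ℝ) / ((s:ℝ)^k * x)) atTop (nhds 1) :=
        tendsto_nat_floor_div_atTop.comp hr
      have hfl_ge : ∀ᶠ k : ℕ in atTop, 1 ≤ ⌊(s:ℝ)^k * x⌋₊ := by
        filter_upwards [hr.eventually_ge_atTop 1] with k hk
        exact Nat.le_floor (by exact_mod_cast hk)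
      have hτ : Tendsto (fun k : ℕ => ((s:ℝ)^k * x) / (⌊(s:ℝ)^k * x⌋₊:ℝ)) atTop (nhds 1) := by
        have hinv := hfl_t.inv₀ one_ne_zero
        rw [inv_one] at hinv
        apply hinv.congr
        intro k
        rw [inv_div]
      have hb : Tendsto (fun k : ℕ => cantorB p s h ⌊(s:ℝ)^k * x⌋₊) atTop (nhds (lam x)) := by
        have hq := hlam x hx0
        have hτθ : Tendsto (fun k : ℕ =>
            (((s:ℝ)^k * x) / (⌊(s:ℝ)^k * x⌋₊:ℝ)) ^ Real.logb s p) atTop (nhds 1) := by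
          have hcont := (Real.continuousAt_rpow_const 1 (Real.logb s p)
            (Or.inl one_ne_zero)).tendsto
          have hcomp := hcont.comp hτ
          rw [Real.one_rpow] at hcomp
          exact hcomp
        have hmul := hq.mul hτθ
        rw [mul_one] at hmul
        apply hmul.congr'
        filter_upwards [hfl_ge] with k hk
        have hy0 : (0:ℝ) < (s:ℝ)^k * x := by positivity
        have hn0 : (0:ℝ) < (⌊(s:ℝ)^k * x⌋₊:ℝ) := by exact_mod_cast hk
        have hyθ : (0:ℝ) < ((s:ℝ)^k * x) ^ Real.logb s p := Real.rpow_pos_of_pos hy0 _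
        simp only [cantorB, cantorA]
        rw [Real.div_rpow hy0.le hn0.le, div_mul_div_comm,
          mul_comm (((s:ℝ)^k * x) ^ Real.logb s p)
            ((⌊(s:ℝ)^k * x⌋₊:ℝ) ^ Real.logb s p),
          mul_div_mul_right _ _ hyθ.ne']
      have hratio : Tendsto (fun k : ℕ => (s:ℝ)^k / (⌊(s:ℝ)^k * x⌋₊:ℝ)) atTop (nhds x⁻¹) := by
        have hdiv := hτ.div_const x
        rw [one_div] at hdiv
        apply hdiv.congr
        intro k
        rw [div_div, mul_comm (⌊(s:ℝ)^k * x⌋₊:ℝ) x, ← div_div, mul_div_assoc,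
          div_self hx0.ne', mul_one]
      rcases lt_or_gt_of_ne hne with hlt | hgt
      · have hev : ∀ᶠ k : ℕ in atTop, cantorB p s h ⌊(s:ℝ)^k * x⌋₊ < α :=
          hb.eventually_lt_const hlt
        have hfx : f x = x⁻¹ := by
          rw [hf]
          simp only
          rw [if_pos, one_div]
          rw [hlamd]
          simp only
          rw [if_pos hx0]
          linarith
        rw [hfx]
        apply hratio.congr'
        filter_upwards [hev] with k hk
        rw [hF, hw]
        simp only
        rw [if_pos hk.le, mul_one_div]
      · have hev : ∀ᶠ k : ℕ in atTop, α < cantorB p s h ⌊(s:ℝ)^k * x⌋₊ :=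
          hb.eventually_const_lt hgt
        have hfx : f x = 0 := by
          rw [hf]
          simp only
          rw [if_neg]
          rw [hlamd]
          simp only
          rw [if_pos hx0]
          intro hc
          linarith
        rw [hfx]
        apply Tendsto.congr' _ (tendsto_const_nhds :
          Tendsto (fun _ : ℕ => (0:ℝ)) atTop (nhds 0))
        filter_upwards [hev] with k hk
        rw [hF, hw]
        simp only
        rw [if_neg (by intro hc; linarith), mul_zero]
  -- block sums
  set S : ℕ → ℝ := fun k => ∑ n ∈ Finset.Ico (s^k) (s^(k+1)), w n with hS
  have hSint : ∀ k : ℕ, S k = ∫ x in Set.Ico ((s:ℝ)⁻¹) 1, F (k+1) x := by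
    intro k
    rw [hS]
    simp only
    rw [CantorAux.step_integral hs w (by omega : 1 ≤ k+1), Nat.add_sub_cancel]
  have hStend : Tendsto S atTop (nhds I) := by
    have hcomp := hDCT.comp (tendsto_add_atTop_nat 1)
    apply hcomp.congr
    intro k
    exact (hSint k).symm
  have hCes := hStend.cesaro
  set C : ℕ → ℝ := fun K => ∑ n ∈ Finset.Ico 1 (s^K), w n with hC
  have hCS : ∀ K, ∑ k ∈ Finset.range K, S k = C K := by
    intro K
    induction K with
    | zero => simp [hC]
    | succ K ih =>
      rw [Finset.sum_range_succ, ih, hC, hS]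
      simp only
      rw [pow_succ]
      exact Finset.sum_Ico_consecutive w (Nat.one_le_pow _ _ (by omega))
        (Nat.le_mul_of_pos_right _ (by omega))
  have hCes' : Tendsto (fun K : ℕ => ((K:ℝ))⁻¹ * C K) atTop (nhds I) := by
    apply hCes.congr
    intro K
    rw [hCS K]
  have hC0 : ∀ K, 0 ≤ C K := fun K => Finset.sum_nonneg fun n _ => hw0 n
  have hlogs : (0:ℝ) < Real.log s := Real.log_pos hs1
  have h1 : Tendsto (fun K : ℕ => (K:ℝ)/((K:ℝ)+1)) atTop (nhds 1) :=
    tendsto_natCast_div_add_atTop (1:ℝ)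
  have hLo : Tendsto (fun K : ℕ => (((K:ℝ)+1) * Real.log s)⁻¹ * C K) atTop
      (nhds ((Real.log s)⁻¹ * I)) := by
    have h2 := h1.mul hCes'
    rw [one_mul] at h2
    have h3 := h2.const_mul (Real.log s)⁻¹
    apply h3.congr'
    filter_upwards [eventually_ge_atTop 1] with K hK
    have hK0 : (0:ℝ) < K := by exact_mod_cast hK
    field_simp
  have hUp : Tendsto (fun K : ℕ => ((K:ℝ) * Real.log s)⁻¹ * C (K+1)) atTop
      (nhds ((Real.log s)⁻¹ * I)) := by
    have h4 := hCes'.comp (tendsto_add_atTop_nat 1)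
    have h5 := h1.inv₀ one_ne_zero
    rw [inv_one] at h5
    have h6 := h5.mul h4
    rw [one_mul] at h6
    have h7 := h6.const_mul (Real.log s)⁻¹
    apply h7.congr'
    filter_upwards [eventually_ge_atTop 1] with K hK
    have hK0 : (0:ℝ) < K := by exact_mod_cast hK
    simp only [Function.comp]
    push_cast
    field_simp
  have hKt : Tendsto (fun x : ℝ => Nat.log s ⌊x⌋₊) atTop atTop := by
    apply Filter.tendsto_atTop_atTop.mpr
    intro N
    refine ⟨(s:ℝ)^N, fun x hx => ?_⟩
    have hxpos : (0:ℝ) < x := lt_of_lt_of_le (by positivity) hx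
    have h1' : s^N ≤ ⌊x⌋₊ := by
      apply Nat.le_floor
      push_cast
      exact hx
    have hne0 : ⌊x⌋₊ ≠ 0 := by
      have : 0 < s^N := Nat.pow_pos (by omega)
      omega
    exact (Nat.le_log_iff_pow_le (by omega) hne0).mpr h1'
  apply tendsto_of_tendsto_of_tendsto_of_le_of_le' (hLo.comp hKt) (hUp.comp hKt)
  · -- lower bound
    filter_upwards [eventually_ge_atTop ((s:ℝ))] with x hxs
    have hx1 : (1:ℝ) < x := lt_of_lt_of_le hs1 hxs
    have hx0 : (0:ℝ) < x := by linarith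
    have hfl1 : s ≤ ⌊x⌋₊ := Nat.le_floor (by exact_mod_cast hxs)
    have hfl0 : ⌊x⌋₊ ≠ 0 := by omega
    set K := Nat.log s ⌊x⌋₊ with hK
    have hlow : s^K ≤ ⌊x⌋₊ := Nat.pow_log_le_self s hfl0
    have hhigh : ⌊x⌋₊ < s^(K+1) := Nat.lt_pow_succ_log_self (by omega) _
    have hxK : ((s:ℝ))^K ≤ x := by
      calc ((s:ℝ))^K = ((s^K : ℕ) : ℝ) := by push_cast; ring
        _ ≤ (⌊x⌋₊ : ℝ) := by exact_mod_cast hlow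
        _ ≤ x := Nat.floor_le hx0.le
    have hlogx_lb : (K:ℝ) * Real.log s ≤ Real.log x := by
      calc (K:ℝ) * Real.log s = Real.log ((s:ℝ)^K) := (Real.log_pow (s:ℝ) K).symm
        _ ≤ Real.log x := Real.log_le_log (by positivity) hxK
    have hlogx_ub : Real.log x ≤ ((K:ℝ)+1) * Real.log s := by
      have hxK2 : x < (s:ℝ)^(K+1) := by
        calc x < (⌊x⌋₊ : ℝ) + 1 := Nat.lt_floor_add_one x
          _ ≤ ((s^(K+1) : ℕ) : ℝ) := by exact_mod_cast hhigh
          _ = (s:ℝ)^(K+1) := by push_cast; ring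
      calc Real.log x ≤ Real.log ((s:ℝ)^(K+1)) := Real.log_le_log hx0 hxK2.le
        _ = ((K:ℝ)+1) * Real.log s := by rw [Real.log_pow]; push_cast; ring
    have hlogx0 : 0 < Real.log x := Real.log_pos hx1
    have hsum : ∑ n ∈ Finset.Icc 1 ⌊x⌋₊, w n = ∑ n ∈ Finset.Ico 1 (⌊x⌋₊+1), w n := by
      rw [Finset.Ico_add_one_right_eq_Icc]
    have hlb : C K ≤ ∑ n ∈ Finset.Icc 1 ⌊x⌋₊, w n := by
      rw [hsum, hC]
      apply Finset.sum_le_sum_of_subset_of_nonneg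
      · exact Finset.Ico_subset_Ico le_rfl (by omega)
      · intro n _ _
        exact hw0 n
    calc (((K:ℝ)+1) * Real.log s)⁻¹ * C K ≤ (Real.log x)⁻¹ * C K := by
          apply mul_le_mul_of_nonneg_right _ (hC0 K)
          apply inv_anti₀ hlogx0 hlogx_ub
      _ ≤ (Real.log x)⁻¹ * ∑ n ∈ Finset.Icc 1 ⌊x⌋₊, w n := by
          apply mul_le_mul_of_nonneg_left hlb (by positivity)
  · -- upper bound
    filter_upwards [eventually_ge_atTop ((s:ℝ))] with x hxs
    have hx1 : (1:ℝ) < x := lt_of_lt_of_le hs1 hxs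
    have hx0 : (0:ℝ) < x := by linarith
    have hfl1 : s ≤ ⌊x⌋₊ := Nat.le_floor (by exact_mod_cast hxs)
    have hfl0 : ⌊x⌋₊ ≠ 0 := by omega
    set K := Nat.log s ⌊x⌋₊ with hK
    have hK1 : 1 ≤ K := by
      have : s^1 ≤ ⌊x⌋₊ := by simpa using hfl1
      exact (Nat.le_log_iff_pow_le (by omega) hfl0).mpr this
    have hlow : s^K ≤ ⌊x⌋₊ := Nat.pow_log_le_self s hfl0
    have hhigh : ⌊x⌋₊ < s^(K+1) := Nat.lt_pow_succ_log_self (by omega) _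
    have hxK : ((s:ℝ))^K ≤ x := by
      calc ((s:ℝ))^K = ((s^K : ℕ) : ℝ) := by push_cast; ring
        _ ≤ (⌊x⌋₊ : ℝ) := by exact_mod_cast hlow
        _ ≤ x := Nat.floor_le hx0.le
    have hlogx_lb : (K:ℝ) * Real.log s ≤ Real.log x := by
      calc (K:ℝ) * Real.log s = Real.log ((s:ℝ)^K) := (Real.log_pow (s:ℝ) K).symm
        _ ≤ Real.log x := Real.log_le_log (by positivity) hxK
    have hlogx0 : 0 < Real.log x := Real.log_pos hx1
    have hKlog0 : 0 < (K:ℝ) * Real.log s := by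
      have : (1:ℝ) ≤ K := by exact_mod_cast hK1
      nlinarith
    have hsum : ∑ n ∈ Finset.Icc 1 ⌊x⌋₊, w n = ∑ n ∈ Finset.Ico 1 (⌊x⌋₊+1), w n := by
      rw [Finset.Ico_add_one_right_eq_Icc]
    have hub : ∑ n ∈ Finset.Icc 1 ⌊x⌋₊, w n ≤ C (K+1) := by
      rw [hsum, hC]
      apply Finset.sum_le_sum_of_subset_of_nonneg
      · exact Finset.Ico_subset_Ico le_rfl (by omega)
      · intro n _ _
        exact hw0 n
    have hsum0 : 0 ≤ ∑ n ∈ Finset.Icc 1 ⌊x⌋₊, w n := Finset.sum_nonneg fun n _ => hw0 n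
    calc (Real.log x)⁻¹ * ∑ n ∈ Finset.Icc 1 ⌊x⌋₊, w n
        ≤ (Real.log x)⁻¹ * C (K+1) := by
          apply mul_le_mul_of_nonneg_left hub (by positivity)
      _ ≤ ((K:ℝ) * Real.log s)⁻¹ * C (K+1) := by
          apply mul_le_mul_of_nonneg_right _ (hC0 (K+1))
          apply inv_anti₀ hKlog0 hlogx_lb
end

section
/- In the linear case h(i) = q·i + r (where q ≥ 2, r ∈ {0,...,q-1}, p > q(s-1) + r, s ≥ 2): for any n ≥ 1, b_{sn+s-1} < b_{sn+s-2} < ... < b_{sn+1} < b_n ≤ b_{sn}, and b_{sn} = b_n if and only if r = 0. More generally, for any 0 ≤ ℓ < k and s-ary digits ε_k...ε_{ℓ+1} with ε_k ≠ 0, the quantity b_{[ε_k ... ε_{ℓ+1} ε_ℓ (s-1)^ℓ]_s} is strictly decreasing in ε_ℓ ∈ {0,...,s-1}. -/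
open Real Filter Set MeasureTheory Topology
open scoped Classical ENNReal

/-- `b_n` in the linear case `h(i) = q·i + r`. -/
noncomputable def linB (p q s r : ℕ) (n : ℕ) : ℝ :=
  cantorB p s (fun i => q * i + r) n
open Real

private lemma cantor_step (p s : ℕ) (h : ℕ → ℕ) (hs : 2 ≤ s) (n d : ℕ) (hd : d < s)
    (hpos : 0 < s * n + d) :
    cantorInt p s h (s * n + d) = h d + p * cantorInt p s h n := by
  unfold cantorInt
  rw [Nat.digits_def' (by omega : 1 < s) hpos, Nat.mul_add_div (by omega), Nat.mul_add_mod,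
    Nat.mod_eq_of_lt hd, Nat.div_eq_of_lt hd, Nat.add_zero]
  simp [List.foldr_cons]

private lemma cantor_ge (p s q r : ℕ) (hs : 2 ≤ s) (hsp : s ≤ p) :
    ∀ n, q * n ≤ cantorInt p s (fun i => q * i + r) n := by
  intro n
  induction n using Nat.strong_induction_on with
  | _ n ih =>
    rcases Nat.eq_zero_or_pos n with h0 | h0
    · subst h0; simp [cantorInt]
    · have hd : n % s < s := Nat.mod_lt _ (by omega)
      have hrec := cantor_step p s (fun i => q * i + r) hs (n / s) (n % s) hd
        (by rw [Nat.div_add_mod]; exact h0)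
      rw [Nat.div_add_mod] at hrec
      rw [hrec]
      have hih : q * (n / s) ≤ cantorInt p s (fun i => q * i + r) (n / s) :=
        ih _ (Nat.div_lt_self h0 (by omega))
      have h1 : s * (q * (n / s)) ≤ p * cantorInt p s (fun i => q * i + r) (n / s) :=
        Nat.mul_le_mul hsp hih
      have h2 : q * n = q * (n % s) + s * (q * (n / s)) := by
        conv_lhs => rw [← Nat.div_add_mod n s]
        ring
      calc q * n = q * (n % s) + s * (q * (n / s)) := h2
        _ ≤ q * (n % s) + p * cantorInt p s (fun i => q * i + r) (n / s) :=
            Nat.add_le_add_left h1 _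
        _ ≤ (q * (n % s) + r) + p * cantorInt p s (fun i => q * i + r) (n / s) := by omega

private lemma cantor_ge' (p s q r : ℕ) (hs : 2 ≤ s) (hsp : s ≤ p) (n : ℕ) (hn : 1 ≤ n) :
    q * n + r ≤ cantorInt p s (fun i => q * i + r) n := by
  have hd : n % s < s := Nat.mod_lt _ (by omega)
  have hrec := cantor_step p s (fun i => q * i + r) hs (n / s) (n % s) hd
    (by rw [Nat.div_add_mod]; exact hn)
  rw [Nat.div_add_mod] at hrec
  rw [hrec]
  have hih := cantor_ge p s q r hs hsp (n / s)
  have h1 : s * (q * (n / s)) ≤ p * cantorInt p s (fun i => q * i + r) (n / s) :=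
    Nat.mul_le_mul hsp hih
  have h2 : q * n = q * (n % s) + s * (q * (n / s)) := by
    conv_lhs => rw [← Nat.div_add_mod n s]
    ring
  omega

private lemma cantor_formula (p s q r : ℕ) (hs : 2 ≤ s) :
    ∀ ℓ m e : ℕ, 1 ≤ m → e < s →
    cantorInt p s (fun i => q * i + r) (s ^ (ℓ + 1) * m + e * s ^ ℓ + (s ^ ℓ - 1))
      = (q * e + r) * p ^ ℓ + (q * (s - 1) + r) * (∑ j ∈ Finset.range ℓ, p ^ j)
        + p ^ (ℓ + 1) * cantorInt p s (fun i => q * i + r) m := by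
  intro ℓ
  induction ℓ with
  | zero =>
    intro m e hm he
    have := cantor_step p s (fun i => q * i + r) hs m e he (by positivity)
    simpa using this
  | succ ℓ ih =>
    intro m e hm he
    have h1 : 1 ≤ s ^ ℓ := Nat.one_le_pow _ _ (by omega)
    have h2 : 1 ≤ s ^ (ℓ + 1) := Nat.one_le_pow _ _ (by omega)
    have key : s ^ (ℓ + 1 + 1) * m + e * s ^ (ℓ + 1) + (s ^ (ℓ + 1) - 1)
        = s * (s ^ (ℓ + 1) * m + e * s ^ ℓ + (s ^ ℓ - 1)) + (s - 1) := by
      have hss : 1 ≤ s := by omega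
      zify [h1, h2, hss]
      ring
    rw [key, cantor_step p s (fun i => q * i + r) hs _ (s - 1) (by omega) (by omega),
      ih m e hm he]
    have hsum : ∑ j ∈ Finset.range (ℓ + 1), p ^ j
        = (∑ j ∈ Finset.range ℓ, p ^ j) * p + 1 := by
      rw [Finset.sum_range_succ' (fun j => p ^ j) ℓ]
      simp [pow_succ, Finset.sum_mul]
    rw [hsum]
    ring

private lemma rgen {α A B N M : ℝ} (hα : 1 ≤ α) (hN : 0 < N) (hNM : N ≤ M)
    (hB : 0 ≤ B) (h : B * N < A * M) : B * N ^ α < A * M ^ α := by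
  have hM : 0 < M := lt_of_lt_of_le hN hNM
  have hAM : 0 < A * M := lt_of_le_of_lt (by positivity) h
  have eN : N ^ α = N * N ^ (α - 1) := by
    rw [show α = 1 + (α - 1) by ring, Real.rpow_add hN, Real.rpow_one]; ring_nf
  have eM : M ^ α = M * M ^ (α - 1) := by
    rw [show α = 1 + (α - 1) by ring, Real.rpow_add hM, Real.rpow_one]; ring_nf
  have hpow : N ^ (α - 1) ≤ M ^ (α - 1) := Real.rpow_le_rpow hN.le hNM (by linarith)
  have hNp : (0:ℝ) < N ^ (α - 1) := Real.rpow_pos_of_pos hN _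
  calc B * N ^ α = (B * N) * N ^ (α - 1) := by rw [eN]; ring
    _ < (A * M) * N ^ (α - 1) := by exact mul_lt_mul_of_pos_right h hNp
    _ ≤ (A * M) * M ^ (α - 1) := by exact mul_le_mul_of_nonneg_left hpow hAM.le
    _ = A * M ^ α := by rw [eM]; ring

private lemma alpha_ge_one {s p : ℕ} (hs : 2 ≤ s) (hsp : s ≤ p) : 1 ≤ Real.logb s p := by
  have h1 : (1:ℝ) < s := by exact_mod_cast hs
  have h0 : (0:ℝ) < s := by linarith
  have hp : (0:ℝ) < p := by exact_mod_cast lt_of_lt_of_le (by omega : 0 < s) hsp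
  rw [← Real.logb_self_eq_one h1]
  exact (Real.logb_le_logb h1 h0 hp).mpr (by exact_mod_cast hsp)

private lemma s_rpow_alpha {s p : ℕ} (hs : 2 ≤ s) (hsp : 0 < p) :
    (s:ℝ) ^ Real.logb s p = p := by
  refine Real.rpow_logb (by exact_mod_cast (by omega : 0 < s)) ?_ (by exact_mod_cast hsp)
  exact_mod_cast (by omega : s ≠ 1)

private lemma linB_lt (p q s r : ℕ) (hs : 2 ≤ s) (hsp : s ≤ p) (N M : ℕ)
    (hN : 0 < N) (hNM : N ≤ M)
    (h : cantorInt p s (fun i => q * i + r) M * N < cantorInt p s (fun i => q * i + r) N * M) :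
    linB p q s r M < linB p q s r N := by
  have hM : 0 < M := lt_of_lt_of_le hN hNM
  have hNr : (0:ℝ) < N := by exact_mod_cast hN
  have hMr : (0:ℝ) < M := by exact_mod_cast hM
  simp only [linB, cantorB]
  rw [div_lt_div_iff₀ (Real.rpow_pos_of_pos hMr _) (Real.rpow_pos_of_pos hNr _)]
  exact rgen (alpha_ge_one hs hsp) hNr (by exact_mod_cast hNM) (by positivity)
    (by exact_mod_cast h)

private lemma linB_lt_scaled (p q s r : ℕ) (hs : 2 ≤ s) (hsp : s ≤ p) (n : ℕ) (hn : 0 < n)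
    (h : cantorInt p s (fun i => q * i + r) (s * n + 1) * (s * n)
        < p * cantorInt p s (fun i => q * i + r) n * (s * n + 1)) :
    linB p q s r (s * n + 1) < linB p q s r n := by
  set α := Real.logb s p with hαdef
  have hα : 1 ≤ α := alpha_ge_one hs hsp
  have hpp : 0 < p := by omega
  have hnr : (0:ℝ) < n := by exact_mod_cast hn
  have hsnr : (0:ℝ) < (s:ℝ) * n := by
    have : (0:ℝ) < s := by exact_mod_cast (by omega : 0 < s)
    positivity
  have hpr : (0:ℝ) < p := by exact_mod_cast hpp
  have hMr : (0:ℝ) < ((s * n + 1 : ℕ):ℝ) := by positivity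
  simp only [linB, cantorB]
  rw [div_lt_div_iff₀ (Real.rpow_pos_of_pos hMr _) (Real.rpow_pos_of_pos hnr _)]
  set B := (cantorInt p s (fun i => q * i + r) (s * n + 1) : ℝ)
  set A := (cantorInt p s (fun i => q * i + r) n : ℝ)
  have hB : (0:ℝ) ≤ B := by positivity
  have hsn : ((s:ℝ) * n) ^ α = p * (n:ℝ) ^ α := by
    rw [Real.mul_rpow (by positivity) (by positivity), s_rpow_alpha hs hpp]
  have key : (B / p) * ((s:ℝ) * n) < A * ((s * n + 1 : ℕ):ℝ) := by
    rw [div_mul_eq_mul_div, div_lt_iff₀ hpr]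
    have hcast : (B * ((s:ℝ) * n)) = ((cantorInt p s (fun i => q * i + r) (s * n + 1) * (s * n) : ℕ) : ℝ) := by
      push_cast; ring
    rw [hcast]
    calc ((cantorInt p s (fun i => q * i + r) (s * n + 1) * (s * n) : ℕ) : ℝ)
        < ((p * cantorInt p s (fun i => q * i + r) n * (s * n + 1) : ℕ) : ℝ) := by
          exact_mod_cast h
      _ = A * ((s * n + 1 : ℕ):ℝ) * p := by push_cast; ring
  have hres := rgen hα hsnr (by push_cast; linarith) (by positivity) key
  have hleft : B * (n:ℝ) ^ α = (B / p) * ((s:ℝ) * n) ^ α := by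
    rw [hsn]; field_simp
  rw [hleft]
  exact hres

private lemma s_lt_p {p q s r : ℕ} (hs : 2 ≤ s) (hq : 2 ≤ q) (hp : q * (s - 1) + r < p) :
    s < p := by
  have h1 : 2 * (s - 1) ≤ q * (s - 1) := Nat.mul_le_mul_right _ hq
  omega

private lemma hp2_of {p q s r : ℕ} (hs : 2 ≤ s) (hp : q * (s - 1) + r < p) :
    q * s + r < p + q := by
  obtain ⟨t, rfl⟩ : ∃ t, s = t + 1 := ⟨s - 1, by omega⟩
  have : q * (t + 1) = q * t + q := by ring
  simp only [Nat.add_sub_cancel] at hp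
  omega

private lemma P1step (p q s r : ℕ) (hs : 2 ≤ s) (hq : 2 ≤ q) (hr : r < q)
    (hp : q * (s - 1) + r < p) (n i : ℕ) (hn : 1 ≤ n) (hi : i + 1 < s) :
    linB p q s r (s * n + (i + 1)) < linB p q s r (s * n + i) := by
  have hsp : s < p := s_lt_p hs hq hp
  set A0 := cantorInt p s (fun j => q * j + r) n with hA0
  have hN0 : 0 < s * n + i := by have := Nat.mul_le_mul_left s hn; omega
  have haN : cantorInt p s (fun j => q * j + r) (s * n + i) = (q * i + r) + p * A0 := by
    simpa using cantor_step p s (fun j => q * j + r) hs n i (by omega) hN0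
  have haM : cantorInt p s (fun j => q * j + r) (s * n + (i + 1)) = (q * (i + 1) + r) + p * A0 := by
    simpa using cantor_step p s (fun j => q * j + r) hs n (i + 1) hi (by omega)
  apply linB_lt p q s r hs (by omega) _ _ hN0 (by omega)
  rw [haN, haM]
  have h1 : q * n ≤ A0 := cantor_ge p s q r hs (by omega) n
  have h2 : p * (q * n) ≤ p * A0 := Nat.mul_le_mul_left _ h1
  have h3 : s * (q * n) < p * (q * n) :=
    Nat.mul_lt_mul_of_lt_of_le hsp (le_refl _) (by positivity)
  nlinarith [h2, h3]

set_option maxHeartbeats 1000000 in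
private lemma P1b (p q s r : ℕ) (hs : 2 ≤ s) (hq : 2 ≤ q) (hr : r < q)
    (hp : q * (s - 1) + r < p) (n : ℕ) (hn : 1 ≤ n) :
    linB p q s r (s * n + 1) < linB p q s r n := by
  have hsp : s < p := s_lt_p hs hq hp
  have hp2 : q * s + r < p + q := hp2_of hs hp
  set A0 := cantorInt p s (fun j => q * j + r) n with hA0
  have haM : cantorInt p s (fun j => q * j + r) (s * n + 1) = (q * 1 + r) + p * A0 := by
    simpa using cantor_step p s (fun j => q * j + r) hs n 1 (by omega)
      (by have := Nat.mul_le_mul_left s hn; omega)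
  apply linB_lt_scaled p q s r hs (by omega) n hn
  rw [haM]
  have h1 : q * n + r ≤ A0 := cantor_ge' p s q r hs (by omega) n hn
  have harith : (q + r) * (s * n) < p * (q * n + r) := by
    zify at hp2 hr hs hn hq ⊢
    have e0 : (0:ℤ) ≤ (r:ℤ) := by positivity
    have e1 : (0:ℤ) ≤ (n:ℤ) := by positivity
    have hE : (q:ℤ) * s + r + 1 - q ≤ p := by linarith
    have hqq : (2:ℤ) * q ≤ (q:ℤ) * q := by nlinarith
    have t1 : ((q:ℤ) * s + r + 1 - q) * ((q:ℤ) * n + r) ≤ (p:ℤ) * ((q:ℤ) * n + r) :=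
      mul_le_mul_of_nonneg_right hE (by positivity)
    have t2 : (0:ℤ) ≤ ((s:ℤ) - 2) * ((n:ℤ) * ((q:ℤ) * q - q - r)) :=
      mul_nonneg (by linarith) (mul_nonneg e1 (by linarith))
    have t3 : (0:ℤ) ≤ (n:ℤ) * ((r:ℤ) * ((q:ℤ) - 2)) :=
      mul_nonneg e1 (mul_nonneg e0 (by linarith))
    have t4 : 1 * ((q:ℤ) * ((q:ℤ) - 1)) ≤ (n:ℤ) * ((q:ℤ) * ((q:ℤ) - 1)) :=
      mul_le_mul_of_nonneg_right hn (by nlinarith)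
    have t5 : (2:ℤ) ≤ (q:ℤ) * ((q:ℤ) - 1) := by nlinarith
    have t6 : (0:ℤ) ≤ (r:ℤ) * ((q:ℤ) * s + r + 1 - q) := by
      have : (q:ℤ) ≤ (q:ℤ) * s := by nlinarith
      exact mul_nonneg e0 (by linarith)
    linarith [t1, t2, t3, t4, t5, t6]
  have h2 : p * (q * n + r) ≤ p * A0 := Nat.mul_le_mul_left _ h1
  have hfin : (q + r) * (s * n) < p * A0 := lt_of_lt_of_le harith h2
  calc (q * 1 + r + p * A0) * (s * n)
      = (q + r) * (s * n) + p * A0 * (s * n) := by ring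
    _ < p * A0 + p * A0 * (s * n) := by omega
    _ = p * A0 * (s * n + 1) := by ring

set_option maxHeartbeats 1000000 in
private lemma P2step (p q s r : ℕ) (hs : 2 ≤ s) (hq : 2 ≤ q) (hr : r < q)
    (hp : q * (s - 1) + r < p) (ℓ m e : ℕ) (hm : 1 ≤ m) (he : e + 1 < s) :
    linB p q s r (s ^ (ℓ + 1) * m + (e + 1) * s ^ ℓ + (s ^ ℓ - 1))
      < linB p q s r (s ^ (ℓ + 1) * m + e * s ^ ℓ + (s ^ ℓ - 1)) := by
  have hsp : s < p := s_lt_p hs hq hp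
  have hS : 1 ≤ s ^ ℓ := Nat.one_le_pow _ _ (by omega)
  have hP : 1 ≤ p ^ ℓ := Nat.one_le_pow _ _ (by omega)
  have hN0 : 0 < s ^ (ℓ + 1) * m + e * s ^ ℓ + (s ^ ℓ - 1) := by
    have : 1 ≤ s ^ (ℓ + 1) * m := Nat.one_le_iff_ne_zero.mpr (by positivity)
    omega
  have hMN : s ^ (ℓ + 1) * m + (e + 1) * s ^ ℓ + (s ^ ℓ - 1)
      = (s ^ (ℓ + 1) * m + e * s ^ ℓ + (s ^ ℓ - 1)) + s ^ ℓ := by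
    have : (e + 1) * s ^ ℓ = e * s ^ ℓ + s ^ ℓ := by ring
    omega
  have haN := cantor_formula p s q r hs ℓ m e hm (by omega)
  have haM := cantor_formula p s q r hs ℓ m (e + 1) hm he
  have hCm : q * m ≤ cantorInt p s (fun j => q * j + r) m := cantor_ge p s q r hs (by omega) m
  rw [hMN] at haM ⊢
  apply linB_lt p q s r hs (by omega) _ _ hN0 (by omega)
  rw [haN, haM]
  set C := cantorInt p s (fun j => q * j + r) m with hC
  set D := (q * (s - 1) + r) * (∑ j ∈ Finset.range ℓ, p ^ j) with hD
  set N := s ^ (ℓ + 1) * m + e * s ^ ℓ + (s ^ ℓ - 1) with hNdef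
  -- key : q * p ^ ℓ * N < s ^ ℓ * ((q * e + r) * p ^ ℓ + D + p ^ (ℓ + 1) * C)
  have key : q * p ^ ℓ * N < s ^ ℓ * ((q * e + r) * p ^ ℓ + D + p ^ (ℓ + 1) * C) := by
    have h1 : N < s * s ^ ℓ * m + e * s ^ ℓ + s ^ ℓ := by
      have hps : s ^ (ℓ + 1) * m = s * s ^ ℓ * m := by rw [pow_succ]; ring
      rw [hNdef, hps]
      omega
    have hpm : s * m + 1 ≤ p * m := by
      have h4 : (s + 1) * m ≤ p * m := Nat.mul_le_mul_right m (by omega)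
      have h5 : (s + 1) * m = s * m + m := by ring
      omega
    have h2 : q * p ^ ℓ * (s * s ^ ℓ * m + e * s ^ ℓ + s ^ ℓ)
        ≤ s ^ ℓ * ((q * e) * p ^ ℓ + p ^ (ℓ + 1) * (q * m)) := by
      have expand : q * p ^ ℓ * (s * s ^ ℓ * m + e * s ^ ℓ + s ^ ℓ)
          = s ^ ℓ * ((q * e) * p ^ ℓ) + (q * p ^ ℓ * s ^ ℓ) * (s * m + 1) := by ring
      have expand2 : s ^ ℓ * ((q * e) * p ^ ℓ + p ^ (ℓ + 1) * (q * m))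
          = s ^ ℓ * ((q * e) * p ^ ℓ) + (q * p ^ ℓ * s ^ ℓ) * (p * m) := by ring
      rw [expand, expand2]
      exact Nat.add_le_add_left (Nat.mul_le_mul_left _ hpm) _
    have h3 : s ^ ℓ * ((q * e) * p ^ ℓ + p ^ (ℓ + 1) * (q * m))
        ≤ s ^ ℓ * ((q * e + r) * p ^ ℓ + D + p ^ (ℓ + 1) * C) := by
      apply Nat.mul_le_mul_left
      have h6 : p ^ (ℓ + 1) * (q * m) ≤ p ^ (ℓ + 1) * C := Nat.mul_le_mul_left _ hCm
      have h7 : (q * e + r) * p ^ ℓ = q * e * p ^ ℓ + r * p ^ ℓ := by ring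
      omega
    calc q * p ^ ℓ * N < q * p ^ ℓ * (s * s ^ ℓ * m + e * s ^ ℓ + s ^ ℓ) := by
          exact mul_lt_mul_of_pos_left h1 (by positivity)
      _ ≤ s ^ ℓ * ((q * e) * p ^ ℓ + p ^ (ℓ + 1) * (q * m)) := h2
      _ ≤ s ^ ℓ * ((q * e + r) * p ^ ℓ + D + p ^ (ℓ + 1) * C) := h3
  have hdiff : (q * (e + 1) + r) * p ^ ℓ + D + p ^ (ℓ + 1) * C
      = ((q * e + r) * p ^ ℓ + D + p ^ (ℓ + 1) * C) + q * p ^ ℓ := by ring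
  rw [hdiff]
  have expand1 : (((q * e + r) * p ^ ℓ + D + p ^ (ℓ + 1) * C) + q * p ^ ℓ) * N
      = ((q * e + r) * p ^ ℓ + D + p ^ (ℓ + 1) * C) * N + q * p ^ ℓ * N := by ring
  have expand2 : ((q * e + r) * p ^ ℓ + D + p ^ (ℓ + 1) * C) * (N + s ^ ℓ)
      = ((q * e + r) * p ^ ℓ + D + p ^ (ℓ + 1) * C) * N
        + s ^ ℓ * ((q * e + r) * p ^ ℓ + D + p ^ (ℓ + 1) * C) := by ring
  omega

private lemma linB_smul (p q s r : ℕ) (hs : 2 ≤ s) (hq : 2 ≤ q)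
    (hp : q * (s - 1) + r < p) (n : ℕ) (hn : 1 ≤ n) :
    linB p q s r (s * n) = linB p q s r n + r / ((p:ℝ) * (n:ℝ) ^ Real.logb s p) := by
  have hsp : s < p := s_lt_p hs hq hp
  have hpp : 0 < p := by omega
  have ha : cantorInt p s (fun j => q * j + r) (s * n)
      = r + p * cantorInt p s (fun j => q * j + r) n := by
    have h0 : 0 < s * n + 0 := by have := Nat.mul_le_mul_left s hn; omega
    have := cantor_step p s (fun j => q * j + r) hs n 0 (by omega) h0
    simpa using this
  simp only [linB, cantorB]
  set α := Real.logb s p with hα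
  have hnr : (0:ℝ) < n := by exact_mod_cast hn
  have hsr : (0:ℝ) < s := by exact_mod_cast (by omega : 0 < s)
  have hsnα : ((s * n : ℕ):ℝ) ^ α = p * (n:ℝ) ^ α := by
    push_cast
    rw [Real.mul_rpow hsr.le hnr.le, s_rpow_alpha hs hpp]
  rw [ha, hsnα]
  have hpr : (0:ℝ) < p := by exact_mod_cast hpp
  have h1 : (0:ℝ) < (n:ℝ) ^ α := Real.rpow_pos_of_pos hnr _
  push_cast
  field_simp
  ring

theorem stmt17 (p q s r : ℕ) (hs : 2 ≤ s) (hq : 2 ≤ q) (hr : r < q)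
    (hp : q * (s - 1) + r < p) :
    (∀ n : ℕ, 1 ≤ n →
      (∀ i : ℕ, 1 ≤ i → i + 1 ≤ s - 1 →
        linB p q s r (s * n + i + 1) < linB p q s r (s * n + i)) ∧
      linB p q s r (s * n + 1) < linB p q s r n ∧
      linB p q s r n ≤ linB p q s r (s * n) ∧
      (linB p q s r (s * n) = linB p q s r n ↔ r = 0)) ∧
    (∀ k ℓ : ℕ, ℓ < k → ∀ ε : ℕ → ℕ, (∀ i, ε i < s) → 1 ≤ ε k →
      ∀ e₁ e₂ : ℕ, e₁ < e₂ → e₂ < s →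
        linB p q s r ((∑ i ∈ Finset.Icc (ℓ + 1) k, ε i * s ^ i) + e₂ * s ^ ℓ + (s ^ ℓ - 1)) <
        linB p q s r ((∑ i ∈ Finset.Icc (ℓ + 1) k, ε i * s ^ i) + e₁ * s ^ ℓ + (s ^ ℓ - 1))) := by
  constructor
  · intro n hn
    have hbsn := linB_smul p q s r hs hq hp n hn
    have hnr : (0:ℝ) < n := by exact_mod_cast hn
    have hpr : (0:ℝ) < p := by
      have := s_lt_p hs hq hp; exact_mod_cast (by omega : 0 < p)
    have hden : (0:ℝ) < (p:ℝ) * (n:ℝ) ^ Real.logb s p :=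
      mul_pos hpr (Real.rpow_pos_of_pos hnr _)
    refine ⟨?_, P1b p q s r hs hq hr hp n hn, ?_, ?_⟩
    · intro i h1i h2i
      have := P1step p q s r hs hq hr hp n i hn (by omega)
      rwa [← add_assoc] at this
    · rw [hbsn]
      have : (0:ℝ) ≤ (r:ℝ) / ((p:ℝ) * (n:ℝ) ^ Real.logb s p) := by positivity
      linarith
    · rw [hbsn]
      constructor
      · intro h
        have h0 : (r:ℝ) / ((p:ℝ) * (n:ℝ) ^ Real.logb s p) = 0 := by linarith
        have := (div_eq_zero_iff.mp h0).resolve_right (by positivity)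
        exact_mod_cast this
      · intro h
        subst h
        simp
  · intro k ℓ hkl ε hε hεk e₁ e₂ h12 h2s
    set m := ∑ i ∈ Finset.Icc (ℓ + 1) k, ε i * s ^ (i - (ℓ + 1)) with hm
    have hM : ∑ i ∈ Finset.Icc (ℓ + 1) k, ε i * s ^ i = s ^ (ℓ + 1) * m := by
      rw [hm, Finset.mul_sum]
      refine Finset.sum_congr rfl ?_
      intro i hi
      obtain ⟨hi1, hi2⟩ := Finset.mem_Icc.mp hi
      have hsi : s ^ i = s ^ (ℓ + 1) * s ^ (i - (ℓ + 1)) := by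
        rw [← pow_add]; congr 1; omega
      rw [hsi]; ring
    have hm1 : 1 ≤ m := by
      have h1 : 1 ≤ ε k * s ^ (k - (ℓ + 1)) :=
        Nat.one_le_iff_ne_zero.mpr (Nat.mul_ne_zero (by omega)
          (Nat.pos_iff_ne_zero.mp (Nat.pow_pos (by omega))))
      refine le_trans h1 ?_
      rw [hm]
      exact Finset.single_le_sum (f := fun i => ε i * s ^ (i - (ℓ + 1)))
        (fun i _ => Nat.zero_le _) (Finset.mem_Icc.mpr ⟨hkl, le_refl k⟩)
    rw [hM]
    have chain : ∀ e₂' : ℕ, e₁ < e₂' → e₂' < s →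
        linB p q s r (s ^ (ℓ + 1) * m + e₂' * s ^ ℓ + (s ^ ℓ - 1))
          < linB p q s r (s ^ (ℓ + 1) * m + e₁ * s ^ ℓ + (s ^ ℓ - 1)) := by
      intro e₂'
      induction e₂' with
      | zero => intro h; exact absurd h (Nat.not_lt_zero e₁)
      | succ e ih =>
        intro h12' hlt
        rcases Nat.lt_or_ge e₁ e with hlt2 | hge
        · exact lt_trans (P2step p q s r hs hq hr hp ℓ m e hm1 hlt) (ih hlt2 (by omega))
        · have he : e₁ = e := by omega
          subst he
          exact P2step p q s r hs hq hr hp ℓ m e₁ hm1 hlt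
    exact chain e₂ h12 h2s
end

section
/- In the linear case h(i) = q·i + r (q ≥ 2, r ∈ {0,...,q-1}, p > q(s-1) + r, s ≥ 2): inf{b_n : n ≥ 1} = (q(s-1) + r)/(p-1) and sup{b_n : n ≥ 1} = (q(p-1) + p·r)/(p-1). Explicitly, b_{s^k} = (q(p-1)+pr)/(p-1) − r/((p-1)p^k) increases to the supremum, and b_{s^{k+1}-1} = ((q(s-1)+r)/(p-1)) · (p^{k+1}-1)/(s^{k+1}-1)^{log_s p} decreases to the infimum. -/
open Real Filter Set MeasureTheory Topology
open scoped Classical ENNReal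

/-- Tangent line inequality for rpow. -/
lemma rpow_tangent {x y a : ℝ} (hx : 0 < x) (hy : 0 ≤ y) (ha : 1 ≤ a) :
    x ^ a + a * x ^ (a - 1) * (y - x) ≤ y ^ a := by
  have hs : -1 ≤ y / x - 1 := by
    have : 0 ≤ y / x := div_nonneg hy hx.le
    linarith
  have hb := one_add_mul_self_le_rpow_one_add hs ha
  have h1 : (1 : ℝ) + (y / x - 1) = y / x := by ring
  rw [h1] at hb
  have hxa : (0 : ℝ) < x ^ a := Real.rpow_pos_of_pos hx a
  have hdiv : (y / x) ^ a = y ^ a / x ^ a := Real.div_rpow hy hx.le a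
  have h2 := mul_le_mul_of_nonneg_left hb hxa.le
  rw [hdiv, mul_div_cancel₀ _ (ne_of_gt hxa)] at h2
  have hxsub : x ^ (a - 1) = x ^ a / x := by
    rw [Real.rpow_sub hx, Real.rpow_one]
  calc x ^ a + a * x ^ (a - 1) * (y - x)
      = x ^ a * (1 + a * (y / x - 1)) := by
        rw [hxsub]; field_simp
    _ ≤ y ^ a := h2

/-- monotonicity of `u ↦ (1+u)^a - u^a` on `[0,1]`. -/
lemma rpow_incr_mono {u v a : ℝ} (hu : 0 ≤ u) (huv : u ≤ v) (hv1 : v ≤ 1) (ha : 1 ≤ a) :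
    (1 + u) ^ a - u ^ a ≤ (1 + v) ^ a - v ^ a := by
  rcases eq_or_lt_of_le huv with h | h
  · rw [h]
  have hv : 0 < v := lt_of_le_of_lt hu h
  have h1 := rpow_tangent (x := v) (y := u) hv hu ha
  have h2 := rpow_tangent (x := 1 + u) (y := 1 + v) (by linarith) (by linarith) ha
  have h3 : v ^ (a - 1) ≤ (1 + u) ^ (a - 1) :=
    Real.rpow_le_rpow hv.le (by linarith) (by linarith)
  have h4 : a * v ^ (a - 1) * (v - u) ≤ a * (1 + u) ^ (a - 1) * (v - u) := by
    have := mul_le_mul_of_nonneg_left h3 (by linarith : (0:ℝ) ≤ a)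
    exact mul_le_mul_of_nonneg_right this (by linarith)
  nlinarith [h1, h2, h4]

/-- `φ(x) = x log x / (x-1)` is monotone: for `1 < s ≤ p`. -/
lemma philemma {S P : ℝ} (hS : 1 < S) (hSP : S ≤ P) :
    S * Real.log S * (P - 1) ≤ P * Real.log P * (S - 1) := by
  have hP : 1 < P := lt_of_lt_of_le hS hSP
  have hlogS : Real.log S ≤ S - 1 := Real.log_le_sub_one_of_pos (by linarith)
  have hlogdiv : 1 - S / P ≤ Real.log (P / S) := by
    have h1 : Real.log (S / P) ≤ S / P - 1 :=
      Real.log_le_sub_one_of_pos (by positivity)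
    have h2 : Real.log (S / P) = Real.log S - Real.log P :=
      Real.log_div (by linarith) (by linarith)
    have h3 : Real.log (P / S) = Real.log P - Real.log S :=
      Real.log_div (by linarith) (by linarith)
    linarith
  have h3 : Real.log (P / S) = Real.log P - Real.log S :=
    Real.log_div (by positivity) (by positivity)
  have hSpos : (0:ℝ) < S := by linarith
  have hPpos : (0:ℝ) < P := by linarith
  -- P(S-1)logP - S(P-1)logS ≥ (P-S)((S-1) - logS) ≥ 0
  have key : P * (S - 1) * Real.log P - S * (P - 1) * Real.log S ≥
      (P - S) * ((S - 1) - Real.log S) := by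
    have hlog2 : P * (S - 1) * (Real.log (P/S)) ≥ P * (S-1) * (1 - S / P) := by
      apply mul_le_mul_of_nonneg_left hlogdiv (by nlinarith)
    rw [h3] at hlog2
    have hexp : P * (S - 1) * (1 - S / P) = (S - 1) * (P - S) := by
      field_simp
    nlinarith [Real.log_nonneg hS.le]
  nlinarith [Real.log_nonneg hS.le]


lemma cantorInt_zero (p s : ℕ) (h : ℕ → ℕ) : cantorInt p s h 0 = 0 := by
  simp [cantorInt]

lemma cantorInt_rec (p s : ℕ) (h : ℕ → ℕ) (hs : 2 ≤ s) {n : ℕ} (hn : 0 < n) :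
    cantorInt p s h n = h (n % s) + p * cantorInt p s h (n / s) := by
  unfold cantorInt
  rw [Nat.digits_def' (by omega : 1 < s) hn]
  simp [List.foldr]

lemma cantorInt_mul_add (p s : ℕ) (h : ℕ → ℕ) (hs : 2 ≤ s) {m e : ℕ} (he : e < s)
    (hme : 0 < m ∨ 0 < e) :
    cantorInt p s h (s * m + e) = h e + p * cantorInt p s h m := by
  have hn : 0 < s * m + e := by rcases hme with h1 | h1 <;> positivity
  rw [cantorInt_rec p s h hs hn, Nat.mul_add_mod, Nat.mod_eq_of_lt he,
    Nat.mul_add_div (by omega), Nat.div_eq_of_lt he, Nat.add_zero]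

lemma cantorInt_lt (p s : ℕ) (h : ℕ → ℕ) (hs : 2 ≤ s) {n : ℕ} (hn : 0 < n) (hns : n < s) :
    cantorInt p s h n = h n := by
  rw [cantorInt_rec p s h hs hn, Nat.mod_eq_of_lt hns, Nat.div_eq_of_lt hns,
    cantorInt_zero, Nat.mul_zero, Nat.add_zero]


section
variable (p q s r : ℕ)

lemma hps (hs : 2 ≤ s) (hq : 2 ≤ q) (hp : q * (s - 1) + r < p) : s + 1 ≤ p := by
  have h1 : 2 * (s - 1) ≤ q * (s - 1) := Nat.mul_le_mul_right _ hq
  have h2 : 2 * (s - 1) + r < p := lt_of_le_of_lt (by omega) hp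
  omega

lemma A_pow (hs : 2 ≤ s) (hq : 2 ≤ q) (hp : q * (s - 1) + r < p) (k : ℕ) :
    ((cantorInt p s (fun i => q * i + r) (s ^ k) : ℕ) : ℝ) =
      ((q : ℝ) * ((p : ℝ) - 1) + (p : ℝ) * r) / ((p : ℝ) - 1) * (p : ℝ) ^ k
        - (r : ℝ) / ((p : ℝ) - 1) := by
  have hP1 : (1 : ℝ) < p := by
    have := hps p q s r hs hq hp
    have : (3 : ℕ) ≤ p := by omega
    exact_mod_cast lt_of_lt_of_le (by norm_num) this
  have hPne : (p : ℝ) - 1 ≠ 0 := by linarith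
  induction k with
  | zero =>
    rw [pow_zero, cantorInt_lt p s _ hs (by omega) (by omega)]
    push_cast
    field_simp
    ring
  | succ k ih =>
    have hrec : cantorInt p s (fun i => q * i + r) (s ^ (k + 1)) =
        (fun i => q * i + r) 0 + p * cantorInt p s (fun i => q * i + r) (s ^ k) := by
      have h1 : s ^ (k + 1) = s * s ^ k + 0 := by ring
      rw [h1, cantorInt_mul_add p s _ hs (by omega) (Or.inl (Nat.pow_pos (by omega)))]
    rw [hrec]
    push_cast
    rw [ih]
    field_simp
    ring

lemma A_pred (hs : 2 ≤ s) (hq : 2 ≤ q) (hp : q * (s - 1) + r < p) (k : ℕ) :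
    ((cantorInt p s (fun i => q * i + r) (s ^ (k + 1) - 1) : ℕ) : ℝ) =
      ((q : ℝ) * ((s : ℝ) - 1) + r) * ((p : ℝ) ^ (k + 1) - 1) / ((p : ℝ) - 1) := by
  have hP1 : (1 : ℝ) < p := by
    have := hps p q s r hs hq hp
    have : (3 : ℕ) ≤ p := by omega
    exact_mod_cast lt_of_lt_of_le (by norm_num) this
  have hPne : (p : ℝ) - 1 ≠ 0 := by linarith
  have hcast : ∀ i : ℕ, i < s → (((fun i => q * i + r) i : ℕ) : ℝ) = (q : ℝ) * i + r := by
    intro i _; push_cast; ring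
  induction k with
  | zero =>
    rw [pow_one, cantorInt_lt p s _ hs (by omega) (by omega)]
    have : ((q * (s - 1) + r : ℕ) : ℝ) = (q : ℝ) * ((s : ℝ) - 1) + r := by
      push_cast [Nat.cast_sub (by omega : 1 ≤ s)]; ring
    rw [this]
    rw [pow_one]
    field_simp
  | succ k ih =>
    have h1 : 1 ≤ s ^ (k + 1) := Nat.one_le_pow _ _ (by omega)
    obtain ⟨t, ht⟩ : ∃ t, s ^ (k + 1) = t + 1 := ⟨s ^ (k + 1) - 1, by omega⟩
    have hkey : s ^ (k + 2) - 1 = s * (s ^ (k + 1) - 1) + (s - 1) := by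
      calc s ^ (k + 2) - 1 = s * t + s - 1 := by
            rw [show s ^ (k+2) = s * s^(k+1) by ring, ht, Nat.mul_add, Nat.mul_one]
        _ = s * t + (s - 1) := Nat.add_sub_assoc (by omega) _
        _ = s * (s ^ (k + 1) - 1) + (s - 1) := by rw [ht]; simp
    rw [hkey, cantorInt_mul_add p s _ hs (by omega : s - 1 < s)
      (Or.inr (by omega : 0 < s - 1))]
    push_cast [Nat.cast_sub (by omega : 1 ≤ s)]
    rw [ih]
    field_simp
    ring

end


section
variable {p q s r : ℕ}

set_option maxHeartbeats 2000000 in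
lemma A_lower (hs : 2 ≤ s) (hq : 2 ≤ q) (hp : q * (s - 1) + r < p) :
    ∀ n : ℕ, 1 ≤ n →
      ((q : ℝ) * ((s : ℝ) - 1) + r) / ((p : ℝ) - 1) * (((n : ℝ) + 1) ^ Real.logb s p - 1)
        ≤ (cantorInt p s (fun i => q * i + r) n : ℝ) := by
  have hsp := hps p q s r hs hq hp
  have hS1 : (1 : ℝ) < s := by exact_mod_cast hs
  have hSpos : (0 : ℝ) < s := by linarith
  have hP1 : (1 : ℝ) < p := by
    have h3 : (3:ℕ) ≤ p := by omega
    exact_mod_cast lt_of_lt_of_le (by norm_num) h3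
  have hPpos : (0 : ℝ) < p := by linarith
  have hSP : (s : ℝ) + 1 ≤ p := by exact_mod_cast hsp
  set α : ℝ := Real.logb s p with hα
  set L : ℝ := ((q : ℝ) * ((s : ℝ) - 1) + r) / ((p : ℝ) - 1) with hL
  clear_value α L
  have hα1 : 1 ≤ α := by
    rw [hα, Real.le_logb_iff_rpow_le hS1 hPpos, Real.rpow_one]; linarith
  have hsa : (s : ℝ) ^ α = p := by rw [hα]; exact Real.rpow_logb hSpos (by linarith) hPpos
  have hQ2 : (2 : ℝ) ≤ q := by exact_mod_cast hq
  have hR0 : (0 : ℝ) ≤ r := Nat.cast_nonneg r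
  have hLnum : (0:ℝ) ≤ (q : ℝ) * ((s : ℝ) - 1) + r := by nlinarith
  have hL0 : 0 ≤ L := by rw [hL]; exact div_nonneg hLnum (by linarith)
  have hPne : (p:ℝ) - 1 ≠ 0 := by linarith
  have hLP : L * ((p:ℝ) - 1) = (q : ℝ) * ((s : ℝ) - 1) + r := by
    rw [hL]; field_simp
  have hkey : (q : ℝ) * s ≤ L * α * (p : ℝ) := by
    have hlogS : 0 < Real.log s := Real.log_pos hS1
    have hlogP : 0 < Real.log p := Real.log_pos hP1
    have hφ := philemma hS1 (by linarith : (s:ℝ) ≤ p)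
    have hexp : L * α * (p : ℝ) =
        (((q : ℝ) * ((s : ℝ) - 1) + r) * Real.log p * p) / (((p:ℝ) - 1) * Real.log s) := by
      rw [hL, hα, Real.logb]; field_simp
    rw [hexp, le_div_iff₀ (mul_pos (by linarith : (0:ℝ) < (p:ℝ) - 1) hlogS)]
    have h1 : (q:ℝ) * ((s:ℝ) * Real.log s * ((p:ℝ)-1)) ≤
        (q:ℝ) * ((p:ℝ) * Real.log p * ((s:ℝ)-1)) :=
      mul_le_mul_of_nonneg_left hφ (by linarith)
    nlinarith [mul_pos hlogP hPpos, mul_nonneg hR0 (mul_pos hlogP hPpos).le]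
  intro n
  induction n using Nat.strong_induction_on with
  | _ n ih =>
    intro hn
    rcases lt_or_ge n s with hns | hns
    · -- base case : 1 ≤ n < s
      rw [cantorInt_lt p s _ hs (by omega) hns]
      have hNcast : ((((fun i => q * i + r) n : ℕ)) : ℝ) = (q:ℝ) * n + r := by push_cast; ring
      rw [hNcast]
      have hN1 : (1:ℝ) ≤ (n:ℝ) := by exact_mod_cast hn
      have hNS : (n:ℝ) ≤ (s:ℝ) - 1 := by
        have h1 : ((n:ℕ):ℝ) + 1 ≤ s := by exact_mod_cast hns
        linarith
      set t : ℝ := (n:ℝ) + 1 with htdef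
      clear_value t
      have hb0 : 0 ≤ (t - 1) / ((s:ℝ) - 1) := div_nonneg (by linarith) (by linarith)
      have ha0 : 0 ≤ ((s:ℝ) - t) / ((s:ℝ) - 1) := div_nonneg (by linarith) (by linarith)
      have hSne : (s:ℝ) - 1 ≠ 0 := by linarith
      have hab : ((s:ℝ) - t) / ((s:ℝ) - 1) + (t - 1) / ((s:ℝ) - 1) = 1 := by
        field_simp
        ring
      have hconv := (convexOn_rpow hα1).2 (Set.mem_Ici.2 (by norm_num : (0:ℝ) ≤ 1))
        (Set.mem_Ici.2 (by linarith : (0:ℝ) ≤ (s:ℝ))) ha0 hb0 hab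
      simp only [smul_eq_mul] at hconv
      have hcomb : ((s:ℝ) - t) / ((s:ℝ) - 1) * 1 + (t - 1) / ((s:ℝ) - 1) * (s:ℝ) = t := by
        field_simp
        ring
      rw [hcomb, Real.one_rpow, hsa] at hconv
      have step1 : L * (t ^ α - 1) ≤ L * ((t - 1) / ((s:ℝ) - 1) * ((p:ℝ) - 1)) := by
        apply mul_le_mul_of_nonneg_left _ hL0
        have hh : ((s:ℝ) - t) / ((s:ℝ) - 1) * 1 + (t - 1) / ((s:ℝ) - 1) * (p:ℝ) - 1 =
            (t - 1) / ((s:ℝ) - 1) * ((p:ℝ) - 1) := by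
          field_simp
          ring
        linarith [hconv, hh.symm.le]
      have step2 : L * ((t - 1) / ((s:ℝ) - 1) * ((p:ℝ) - 1)) =
          ((q:ℝ) * ((s:ℝ) - 1) + r) * ((n:ℝ) / ((s:ℝ) - 1)) := by
        have ht1 : t - 1 = (n:ℝ) := by rw [htdef]; ring
        rw [ht1, hL]
        field_simp
      have step3 : ((q:ℝ) * ((s:ℝ) - 1) + r) * ((n:ℝ) / ((s:ℝ) - 1)) ≤ (q:ℝ) * n + r := by
        have hmul : ((q:ℝ) * ((s:ℝ) - 1) + r) * (n:ℝ) ≤ ((q:ℝ) * n + r) * ((s:ℝ) - 1) := by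
          have hh := mul_nonneg hR0 (sub_nonneg.2 hNS)
          nlinarith [hh]
        have h2 := (div_le_iff₀ (show (0:ℝ) < (s:ℝ) - 1 by linarith)).2 hmul
        calc ((q:ℝ) * ((s:ℝ) - 1) + r) * ((n:ℝ) / ((s:ℝ) - 1))
            = ((q:ℝ) * ((s:ℝ) - 1) + r) * (n:ℝ) / ((s:ℝ) - 1) := by ring
          _ ≤ (q:ℝ) * n + r := h2
      calc L * (t ^ α - 1) ≤ _ := step1
        _ = _ := step2
        _ ≤ (q:ℝ) * n + r := step3
    · -- inductive step : n ≥ s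
      have hn0 : 0 < n := by omega
      have hes : n % s < s := Nat.mod_lt _ (by omega)
      have hm1 : 1 ≤ n / s := (Nat.one_le_div_iff (by omega)).2 hns
      have hmn : n / s < n := Nat.div_lt_self hn0 (by omega)
      have hsplit : s * (n / s) + n % s = n := Nat.div_add_mod n s
      have hrec : cantorInt p s (fun i => q * i + r) n =
          (q * (n % s) + r) + p * cantorInt p s (fun i => q * i + r) (n / s) := by
        have h1 := cantorInt_mul_add p s (fun i => q * i + r) hs hes (Or.inl (by omega : 0 < n / s))
        rw [hsplit] at h1
        exact h1
      rw [hrec]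
      have hih := ih (n / s) hmn hm1
      set M : ℝ := ((n / s : ℕ) : ℝ) with hM
      set E : ℝ := ((n % s : ℕ) : ℝ) with hE
      have hM1 : 1 ≤ M := by rw [hM]; exact_mod_cast hm1
      have hE0 : 0 ≤ E := Nat.cast_nonneg _
      have hES : E ≤ (s:ℝ) - 1 := by
        have h1 : ((n % s : ℕ) : ℝ) + 1 ≤ s := by exact_mod_cast hes
        rw [hE]; linarith
      have hNcast : (n : ℝ) = (s:ℝ) * M + E := by
        rw [hM, hE]; exact_mod_cast hsplit.symm
      set x : ℝ := (s:ℝ) * M + E + 1 with hx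
      set y : ℝ := (s:ℝ) * M + (s:ℝ) with hy
      have hx0 : 0 < x := by rw [hx]; nlinarith
      have hyx : y - x = (s:ℝ) - 1 - E := by rw [hx, hy]; ring
      have hyx0 : 0 ≤ y - x := by rw [hyx]; linarith
      have htan := rpow_tangent hx0 (by nlinarith : (0:ℝ) ≤ y) hα1
      have hxS : (s:ℝ) ≤ x := by rw [hx]; nlinarith
      have hpow : (s:ℝ) ^ (α - 1) ≤ x ^ (α - 1) :=
        Real.rpow_le_rpow hSpos.le hxS (by linarith)
      have hSα : (s:ℝ) ^ (α - 1) = (p:ℝ) / (s:ℝ) := by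
        rw [Real.rpow_sub hSpos, Real.rpow_one, hsa]
      rw [hSα] at hpow
      have hyα : y ^ α = (p:ℝ) * (M + 1) ^ α := by
        rw [show y = (s:ℝ) * (M + 1) by rw [hy]; ring,
          Real.mul_rpow hSpos.le (by linarith : (0:ℝ) ≤ M + 1), hsa]
      have hq' : (q:ℝ) ≤ L * (α * ((p:ℝ) / s)) := by
        rw [show L * (α * ((p:ℝ) / s)) = L * α * (p:ℝ) / s by ring, le_div_iff₀ hSpos]
        linarith
      have h5 : (q:ℝ) * (y - x) ≤ L * (y ^ α - x ^ α) := by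
        calc (q:ℝ) * (y - x) ≤ (L * (α * ((p:ℝ)/s))) * (y - x) :=
              mul_le_mul_of_nonneg_right hq' hyx0
          _ = L * (α * ((p:ℝ)/s) * (y - x)) := by ring
          _ ≤ L * (α * x ^ (α-1) * (y - x)) := by
              apply mul_le_mul_of_nonneg_left _ hL0
              apply mul_le_mul_of_nonneg_right _ hyx0
              exact mul_le_mul_of_nonneg_left hpow (by linarith)
          _ ≤ L * (y ^ α - x ^ α) := by
              apply mul_le_mul_of_nonneg_left _ hL0
              linarith
      have hAmP : (p:ℝ) * (L * ((M + 1) ^ α - 1)) ≤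
          (p:ℝ) * (cantorInt p s (fun i => q * i + r) (n / s) : ℝ) :=
        mul_le_mul_of_nonneg_left hih hPpos.le
      have hgoalx : (n:ℝ) + 1 = x := by rw [hx, hNcast]
      push_cast
      rw [hgoalx]
      rw [hyx] at h5
      nlinarith [h5, hAmP, hLP, hyα]

end

set_option maxHeartbeats 2000000 in
lemma A_upper (hs : 2 ≤ s) (hq : 2 ≤ q) (hp : q * (s - 1) + r < p) :
    ∀ n : ℕ, 1 ≤ n →
      (cantorInt p s (fun i => q * i + r) n : ℝ) ≤
        ((q : ℝ) * ((p : ℝ) - 1) + (p : ℝ) * r) / ((p : ℝ) - 1) * (n : ℝ) ^ Real.logb s p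
          - (r : ℝ) / ((p : ℝ) - 1) := by
  have hsp := hps p q s r hs hq hp
  have hS1 : (1 : ℝ) < s := by exact_mod_cast hs
  have hSpos : (0 : ℝ) < s := by linarith
  have hP1 : (1 : ℝ) < p := by
    have h3 : (3:ℕ) ≤ p := by omega
    exact_mod_cast lt_of_lt_of_le (by norm_num) h3
  have hPpos : (0 : ℝ) < p := by linarith
  have hSP : (s : ℝ) + 1 ≤ p := by exact_mod_cast hsp
  set α : ℝ := Real.logb s p with hα
  set U : ℝ := ((q : ℝ) * ((p : ℝ) - 1) + (p : ℝ) * r) / ((p : ℝ) - 1) with hU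
  clear_value α U
  have hα1 : 1 ≤ α := by
    rw [hα, Real.le_logb_iff_rpow_le hS1 hPpos, Real.rpow_one]; linarith
  have hsa : (s : ℝ) ^ α = p := by rw [hα]; exact Real.rpow_logb hSpos (by linarith) hPpos
  have hQ2 : (2 : ℝ) ≤ q := by exact_mod_cast hq
  have hR0 : (0 : ℝ) ≤ r := Nat.cast_nonneg r
  have hPne : (p:ℝ) - 1 ≠ 0 := by linarith
  have hUP : U * ((p:ℝ) - 1) = (q : ℝ) * ((p:ℝ) - 1) + (p:ℝ) * r := by
    rw [hU]; field_simp
  have hU0 : 0 ≤ U := by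
    rw [hU]
    apply div_nonneg _ (by linarith)
    nlinarith
  have hUq : (q:ℝ) ≤ U := by nlinarith [mul_nonneg hR0 hPpos.le]
  have hdivPR : (p:ℝ) * ((r:ℝ) / ((p:ℝ) - 1)) = (r:ℝ) + (r:ℝ) / ((p:ℝ) - 1) := by
    field_simp; ring
  intro n
  induction n using Nat.strong_induction_on with
  | _ n ih =>
    intro hn
    rcases lt_or_ge n s with hns | hns
    · -- base case
      rw [cantorInt_lt p s _ hs (by omega) hns]
      have hNcast : ((((fun i => q * i + r) n : ℕ)) : ℝ) = (q:ℝ) * n + r := by push_cast; ring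
      rw [hNcast]
      have hN1 : (1:ℝ) ≤ (n:ℝ) := by exact_mod_cast hn
      have hNα : (n:ℝ) ≤ (n:ℝ) ^ α := by
        have h1 : (n:ℝ) ^ (1:ℝ) ≤ (n:ℝ) ^ α :=
          Real.rpow_le_rpow_of_exponent_le hN1 hα1
        rwa [Real.rpow_one] at h1
      have hUN : U * (n:ℝ) ≤ U * (n:ℝ) ^ α := mul_le_mul_of_nonneg_left hNα hU0
      have hlin : (q:ℝ) * n + r + (r:ℝ)/((p:ℝ)-1) ≤ U * (n:ℝ) := by
        have hUN2 : U * ((p:ℝ)-1) * (n:ℝ) = ((q:ℝ)*((p:ℝ)-1) + (p:ℝ)*r) * n := by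
          rw [hUP]
        have key : ((q:ℝ) * n + r + (r:ℝ)/((p:ℝ)-1)) * ((p:ℝ)-1) ≤ U * (n:ℝ) * ((p:ℝ)-1) := by
          have hfs : ((r:ℝ)/((p:ℝ)-1)) * ((p:ℝ)-1) = r := by field_simp
          nlinarith [hUN2, hfs, mul_nonneg (mul_nonneg hR0 hPpos.le) (by linarith : (0:ℝ) ≤ (n:ℝ) - 1)]
        have := le_of_mul_le_mul_right (by linarith [key] :
          ((q:ℝ) * n + r + (r:ℝ)/((p:ℝ)-1)) * ((p:ℝ)-1) ≤ U * (n:ℝ) * ((p:ℝ)-1))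
          (by linarith : (0:ℝ) < (p:ℝ)-1)
        exact this
      linarith
    · -- inductive step
      have hn0 : 0 < n := by omega
      have hes : n % s < s := Nat.mod_lt _ (by omega)
      have hm1 : 1 ≤ n / s := (Nat.one_le_div_iff (by omega)).2 hns
      have hmn : n / s < n := Nat.div_lt_self hn0 (by omega)
      have hsplit : s * (n / s) + n % s = n := Nat.div_add_mod n s
      have hrec : cantorInt p s (fun i => q * i + r) n =
          (q * (n % s) + r) + p * cantorInt p s (fun i => q * i + r) (n / s) := by
        have h1 := cantorInt_mul_add p s (fun i => q * i + r) hs hes (Or.inl (by omega : 0 < n / s))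
        rw [hsplit] at h1
        exact h1
      rw [hrec]
      have hih := ih (n / s) hmn hm1
      set M : ℝ := ((n / s : ℕ) : ℝ) with hM
      set E : ℝ := ((n % s : ℕ) : ℝ) with hE
      have hM1 : 1 ≤ M := by rw [hM]; exact_mod_cast hm1
      have hE0 : 0 ≤ E := Nat.cast_nonneg _
      have hNcast : (n : ℝ) = (s:ℝ) * M + E := by
        rw [hM, hE]; exact_mod_cast hsplit.symm
      set x : ℝ := (s:ℝ) * M with hx
      have hx0 : 0 < x := by rw [hx]; nlinarith
      have htan := rpow_tangent (y := x + E) hx0 (by nlinarith [hx0, hE0] : (0:ℝ) ≤ x + E) hα1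
      have hxS : (s:ℝ) ≤ x := by rw [hx]; nlinarith
      have hpow : (s:ℝ) ^ (α - 1) ≤ x ^ (α - 1) :=
        Real.rpow_le_rpow hSpos.le hxS (by linarith)
      have hSα : (s:ℝ) ^ (α - 1) = (p:ℝ) / (s:ℝ) := by
        rw [Real.rpow_sub hSpos, Real.rpow_one, hsa]
      have hPS1 : (1:ℝ) ≤ (p:ℝ) / (s:ℝ) := by
        rw [le_div_iff₀ hSpos]; linarith
      have hx1 : (1:ℝ) ≤ x ^ (α - 1) := by rw [hSα] at hpow; linarith
      have hincr : E ≤ (x + E) ^ α - x ^ α := by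
        have h1 : E ≤ α * x ^ (α - 1) * E := by
          nlinarith [mul_nonneg (by nlinarith : (0:ℝ) ≤ α * x ^ (α-1) - 1) hE0]
        have h2 : x ^ α + α * x ^ (α - 1) * ((x+E) - x) ≤ (x+E) ^ α := htan
        have h3 : (x+E) - x = E := by ring
        rw [h3] at h2
        linarith
      have hQE : (q:ℝ) * E ≤ U * ((x + E) ^ α - x ^ α) := by
        calc (q:ℝ) * E ≤ U * E := mul_le_mul_of_nonneg_right hUq hE0
          _ ≤ U * ((x + E) ^ α - x ^ α) := mul_le_mul_of_nonneg_left hincr hU0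
      have hxα : x ^ α = (p:ℝ) * M ^ α := by
        rw [hx, Real.mul_rpow hSpos.le (by linarith : (0:ℝ) ≤ M), hsa]
      have hUb : U * x ^ α = (p:ℝ) * (U * M ^ α) := by rw [hxα]; ring
      have hPAm : (p:ℝ) * (cantorInt p s (fun i => q * i + r) (n / s) : ℝ) ≤
          (p:ℝ) * (U * M ^ α - (r:ℝ)/((p:ℝ)-1)) := mul_le_mul_of_nonneg_left hih hPpos.le
      clear_value M E x
      push_cast
      rw [hNcast, ← hE]
      linarith [hQE, hUb, hPAm, hdivPR]


set_option maxHeartbeats 1000000 in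
theorem stmt19 (p q s r : ℕ) (hs : 2 ≤ s) (hq : 2 ≤ q) (hr : r < q)
    (hp : q * (s - 1) + r < p) :
    sInf {x : ℝ | ∃ n : ℕ, 1 ≤ n ∧ linB p q s r n = x} =
      ((q : ℝ) * ((s : ℝ) - 1) + r) / ((p : ℝ) - 1) ∧
    sSup {x : ℝ | ∃ n : ℕ, 1 ≤ n ∧ linB p q s r n = x} =
      ((q : ℝ) * ((p : ℝ) - 1) + (p : ℝ) * r) / ((p : ℝ) - 1) ∧
    (∀ k : ℕ, linB p q s r (s ^ k) =
      ((q : ℝ) * ((p : ℝ) - 1) + (p : ℝ) * r) / ((p : ℝ) - 1) -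
        (r : ℝ) / (((p : ℝ) - 1) * (p : ℝ) ^ k)) ∧
    Monotone (fun k : ℕ => linB p q s r (s ^ k)) ∧
    Tendsto (fun k : ℕ => linB p q s r (s ^ k)) atTop
      (nhds (((q : ℝ) * ((p : ℝ) - 1) + (p : ℝ) * r) / ((p : ℝ) - 1))) ∧
    (∀ k : ℕ, linB p q s r (s ^ (k + 1) - 1) =
      (((q : ℝ) * ((s : ℝ) - 1) + r) / ((p : ℝ) - 1)) *
        (((p : ℝ) ^ (k + 1) - 1) / ((s : ℝ) ^ (k + 1) - 1) ^ Real.logb s p)) ∧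
    Antitone (fun k : ℕ => linB p q s r (s ^ (k + 1) - 1)) ∧
    Tendsto (fun k : ℕ => linB p q s r (s ^ (k + 1) - 1)) atTop
      (nhds (((q : ℝ) * ((s : ℝ) - 1) + r) / ((p : ℝ) - 1))) := by
  have hsp := hps p q s r hs hq hp
  have hS1 : (1 : ℝ) < s := by exact_mod_cast hs
  have hSpos : (0 : ℝ) < s := by linarith
  have hP1 : (1 : ℝ) < p := by
    have h3 : (3:ℕ) ≤ p := by omega
    exact_mod_cast lt_of_lt_of_le (by norm_num) h3
  have hPpos : (0 : ℝ) < p := by linarith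
  have hPne : (p:ℝ) - 1 ≠ 0 := by linarith
  have hSP : (s : ℝ) + 1 ≤ p := by exact_mod_cast hsp
  have hα1 : 1 ≤ Real.logb s p := by
    rw [Real.le_logb_iff_rpow_le hS1 hPpos, Real.rpow_one]; linarith
  have hα0 : 0 < Real.logb s p := by linarith
  have hsa : (s : ℝ) ^ Real.logb s p = p := Real.rpow_logb hSpos (by linarith) hPpos
  set α : ℝ := Real.logb s p with hα
  have hQ0 : (0:ℝ) ≤ q := Nat.cast_nonneg q
  have hQ2 : (2 : ℝ) ≤ q := by exact_mod_cast hq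
  have hR0 : (0 : ℝ) ≤ r := Nat.cast_nonneg r
  set L : ℝ := ((q : ℝ) * ((s : ℝ) - 1) + r) / ((p : ℝ) - 1) with hL
  set U : ℝ := ((q : ℝ) * ((p : ℝ) - 1) + (p : ℝ) * r) / ((p : ℝ) - 1) with hU
  have hL0 : 0 ≤ L := by
    rw [hL]; apply div_nonneg _ (by linarith); nlinarith
  have hU0 : 0 ≤ U := by
    rw [hU]; apply div_nonneg _ (by linarith); nlinarith
  -- rpow of natural powers of s
  have hpow : ∀ k : ℕ, ((s:ℝ) ^ k) ^ α = (p:ℝ) ^ k := by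
    intro k
    rw [← Real.rpow_natCast (s:ℝ) k, ← Real.rpow_mul hSpos.le, mul_comm,
      Real.rpow_mul hSpos.le, hsa, Real.rpow_natCast]
  -- conjunct 3
  have h3 : ∀ k : ℕ, linB p q s r (s ^ k) =
      U - (r : ℝ) / (((p : ℝ) - 1) * (p : ℝ) ^ k) := by
    intro k
    have hPk : (0:ℝ) < (p:ℝ) ^ k := by positivity
    rw [linB, cantorB, A_pow p q s r hs hq hp k]
    rw [Nat.cast_pow, hpow k]
    rw [hU]
    field_simp
  -- conjunct 6
  have h6 : ∀ k : ℕ, linB p q s r (s ^ (k + 1) - 1) =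
      L * (((p : ℝ) ^ (k + 1) - 1) / ((s : ℝ) ^ (k + 1) - 1) ^ α) := by
    intro k
    have h1 : 1 ≤ s ^ (k+1) := Nat.one_le_pow _ _ (by omega)
    have hT1 : (1:ℝ) < (s:ℝ) ^ (k+1) := one_lt_pow₀ hS1 (by omega)
    have hcast : ((s ^ (k + 1) - 1 : ℕ) : ℝ) = (s:ℝ) ^ (k+1) - 1 := by
      push_cast [Nat.cast_sub h1]; ring
    have hden : (0:ℝ) < ((s:ℝ) ^ (k+1) - 1) ^ α := Real.rpow_pos_of_pos (by linarith) α
    rw [linB, cantorB, A_pred p q s r hs hq hp k, hcast, hL, ← hα]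
    field_simp
  -- conjunct 4
  have h4 : Monotone (fun k : ℕ => linB p q s r (s ^ k)) := by
    apply monotone_nat_of_le_succ
    intro k
    rw [h3 k, h3 (k+1)]
    have hle : (r : ℝ) / (((p : ℝ) - 1) * (p : ℝ) ^ (k+1)) ≤
        (r : ℝ) / (((p : ℝ) - 1) * (p : ℝ) ^ k) := by
      rcases eq_or_lt_of_le hR0 with h0 | h0
      · rw [← h0]; simp
      · rw [div_le_div_iff_of_pos_left h0 (mul_pos (by linarith) (pow_pos hPpos (k+1)))
          (mul_pos (by linarith) (pow_pos hPpos k))]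
        have hpp := pow_le_pow_right₀ hP1.le (by omega : k ≤ k + 1)
        have := mul_nonneg (by linarith : (0:ℝ) ≤ (p:ℝ) - 1)
          (sub_nonneg.2 hpp)
        nlinarith
    linarith
  -- conjunct 5
  have h5 : Tendsto (fun k : ℕ => linB p q s r (s ^ k)) atTop (nhds U) := by
    have heq : (fun k : ℕ => linB p q s r (s ^ k)) =
        fun k : ℕ => U - ((r:ℝ)/((p:ℝ)-1)) * ((p:ℝ)⁻¹) ^ k := by
      funext k
      rw [h3 k, inv_pow]
      have : (0:ℝ) < (p:ℝ)^k := by positivity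
      field_simp
    rw [heq]
    have hgeo : Tendsto (fun k : ℕ => ((p:ℝ)⁻¹) ^ k) atTop (nhds 0) :=
      tendsto_pow_atTop_nhds_zero_of_lt_one (by positivity) (by
        rw [inv_lt_one_iff₀]; right; exact hP1)
    have hconst : Tendsto (fun _ : ℕ => U) atTop (nhds U) := tendsto_const_nhds
    simpa using hconst.sub (hgeo.const_mul ((r:ℝ)/((p:ℝ)-1)))
  -- representation of conjunct 6 values via u k
  set u : ℕ → ℝ := fun k => ((s:ℝ) ^ (k+1) - 1)⁻¹ with hu
  have hT1 : ∀ k : ℕ, (1:ℝ) < (s:ℝ) ^ (k+1) := fun k => one_lt_pow₀ hS1 (by omega)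
  have hu0 : ∀ k, 0 < u k := by
    intro k; rw [hu]; simp only; exact inv_pos.2 (by linarith [hT1 k])
  have hu1 : ∀ k, u k ≤ 1 := by
    intro k
    rw [hu]
    simp only
    have h2 : (2:ℝ) ≤ (s:ℝ) ^ (k+1) := by
      calc (2:ℝ) ≤ (s:ℝ) := by exact_mod_cast hs
        _ = (s:ℝ)^1 := (pow_one _).symm
        _ ≤ (s:ℝ)^(k+1) := pow_le_pow_right₀ hS1.le (by omega)
    apply inv_le_one_of_one_le₀
    linarith
  have hrep : ∀ k : ℕ, linB p q s r (s ^ (k + 1) - 1) =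
      L * ((1 + u k) ^ α - (u k) ^ α) := by
    intro k
    rw [h6 k]
    congr 1
    have hT := hT1 k
    have hTne : (s:ℝ) ^ (k+1) - 1 ≠ 0 := by linarith
    have h1u : 1 + u k = ((s:ℝ) ^ (k+1)) / ((s:ℝ) ^ (k+1) - 1) := by
      rw [hu]; field_simp
      ring
    rw [h1u, Real.div_rpow (by positivity) (by linarith), hu]
    simp only
    rw [Real.inv_rpow (by linarith), hpow (k+1)]
    have hden : (0:ℝ) < ((s:ℝ) ^ (k+1) - 1) ^ α := Real.rpow_pos_of_pos (by linarith) α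
    field_simp
  -- conjunct 7
  have h7 : Antitone (fun k : ℕ => linB p q s r (s ^ (k + 1) - 1)) := by
    apply antitone_nat_of_succ_le
    intro k
    rw [hrep k, hrep (k+1)]
    apply mul_le_mul_of_nonneg_left _ hL0
    apply rpow_incr_mono (hu0 (k+1)).le _ (hu1 k) hα1
    rw [hu]
    simp only
    apply inv_anti₀ (by linarith [hT1 k])
    have : (s:ℝ) ^ (k+1) ≤ (s:ℝ) ^ (k+2) := pow_le_pow_right₀ hS1.le (by omega)
    linarith
  -- conjunct 8
  have hutend : Tendsto u atTop (nhds 0) := by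
    have h1 : Tendsto (fun k : ℕ => (s:ℝ) ^ (k+1) - 1) atTop atTop := by
      apply tendsto_atTop_add_const_right
      exact (tendsto_pow_atTop_atTop_of_one_lt hS1).comp (tendsto_add_atTop_nat 1)
    exact h1.inv_tendsto_atTop
  have h8 : Tendsto (fun k : ℕ => linB p q s r (s ^ (k + 1) - 1)) atTop (nhds L) := by
    have heq : (fun k : ℕ => linB p q s r (s ^ (k + 1) - 1)) =
        fun k : ℕ => L * ((1 + u k) ^ α - (u k) ^ α) := funext hrep
    rw [heq]
    have c1 : Tendsto (fun k : ℕ => (1 + u k) ^ α) atTop (nhds 1) := by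
      have hadd : Tendsto (fun k : ℕ => 1 + u k) atTop (nhds 1) := by
        simpa using tendsto_const_nhds.add hutend
      have hc : ContinuousAt (fun z : ℝ => z ^ α) 1 :=
        Real.continuousAt_rpow_const 1 α (Or.inl one_ne_zero)
      have := hc.tendsto.comp hadd
      simpa [Real.one_rpow, Function.comp_def] using this
    have c2 : Tendsto (fun k : ℕ => (u k) ^ α) atTop (nhds 0) := by
      have hc : ContinuousAt (fun z : ℝ => z ^ α) 0 :=
        Real.continuousAt_rpow_const 0 α (Or.inr hα0.le)
      have := hc.tendsto.comp hutend
      simpa [Real.zero_rpow (ne_of_gt hα0), Function.comp_def] using this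
    have := (c1.sub c2).const_mul L
    simpa using this
  -- pointwise bounds
  have hBge : ∀ n : ℕ, 1 ≤ n → L ≤ linB p q s r n := by
    intro n hn
    have hN1 : (1:ℝ) ≤ (n:ℝ) := by exact_mod_cast hn
    have hNpos : (0:ℝ) < (n:ℝ) := by linarith
    have hNα : (0:ℝ) < (n:ℝ) ^ α := Real.rpow_pos_of_pos hNpos α
    have hlow := A_lower hs hq hp n hn
    have hstep : (n:ℝ) ^ α + 1 ≤ ((n:ℝ) + 1) ^ α := by
      have htan := rpow_tangent (x := (n:ℝ)) (y := (n:ℝ)+1) hNpos (by linarith) hα1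
      have hpow1 : (1:ℝ) ≤ (n:ℝ) ^ (α - 1) := by
        have := Real.rpow_le_rpow_of_exponent_le hN1 (by linarith : (0:ℝ) ≤ α - 1)
        rwa [Real.rpow_zero] at this
      nlinarith
    have hLn : L * (n:ℝ) ^ α ≤ (cantorInt p s (fun i => q * i + r) n : ℝ) := by
      have h1 : L * (n:ℝ) ^ α ≤ L * (((n:ℝ) + 1) ^ α - 1) := by
        apply mul_le_mul_of_nonneg_left _ hL0
        linarith
      linarith
    rw [linB, cantorB, le_div_iff₀ hNα]
    exact hLn
  have hBle : ∀ n : ℕ, 1 ≤ n → linB p q s r n ≤ U := by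
    intro n hn
    have hN1 : (1:ℝ) ≤ (n:ℝ) := by exact_mod_cast hn
    have hNpos : (0:ℝ) < (n:ℝ) := by linarith
    have hNα : (0:ℝ) < (n:ℝ) ^ α := Real.rpow_pos_of_pos hNpos α
    have hupp := A_upper hs hq hp n hn
    have hrp : (0:ℝ) ≤ (r:ℝ)/((p:ℝ)-1) := div_nonneg hR0 (by linarith)
    rw [linB, cantorB, div_le_iff₀ hNα]
    calc (cantorInt p s (fun i => q * i + r) n : ℝ)
        ≤ U * (n:ℝ) ^ α - (r:ℝ)/((p:ℝ)-1) := hupp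
      _ ≤ U * (n:ℝ) ^ α := by linarith
  -- sInf and sSup
  set T : Set ℝ := {x : ℝ | ∃ n : ℕ, 1 ≤ n ∧ linB p q s r n = x} with hT
  have hTne : T.Nonempty := ⟨linB p q s r 1, 1, le_refl 1, rfl⟩
  have h2 : sSup T = U := by
    apply IsLUB.csSup_eq _ hTne
    constructor
    · rintro x ⟨n, hn, rfl⟩
      exact hBle n hn
    · intro c hc
      apply le_of_tendsto h5
      filter_upwards with k
      exact hc ⟨s ^ k, Nat.one_le_pow _ _ (by omega), rfl⟩
  have h1 : sInf T = L := by
    apply IsGLB.csInf_eq _ hTne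
    constructor
    · rintro x ⟨n, hn, rfl⟩
      exact hBge n hn
    · intro c hc
      apply ge_of_tendsto h8
      filter_upwards with k
      refine hc ⟨s ^ (k+1) - 1, ?_, rfl⟩
      have : s ≤ s ^ (k+1) := Nat.le_self_pow (by omega) s
      omega
  exact ⟨h1, h2, h3, h4, h5, h6, h7, h8⟩
end
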